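/- arXiv:2003.06928 — 8 statements merged into one kernel-verified Lean document; each statement's English description precedes it below -/
import Mathlib

section
/- Let L be a resolvent positive linear operator on the space of real symmetric n×n matrices, and let T > 0. Suppose X, Z : [0,T] → (symmetric n×n real matrices) are differentiable functions such that X(t) is positive semidefinite for all t ∈ [0,T], the derivative satisfies X'(t) ≤ L(X(t)) for all t ∈ [0,T] (i.e., L(X(t)) − X'(t) is positive semidefinite), Z solves the matrix differential equation Z'(t) = L(Z(t)) with Z(t) positive semidefinite for all t ∈ [0,T], and X(0) ≤ Z(0). Then X(t) ≤ Z(t) for all t ∈ [0,T]. -/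
open Matrix Set Filter Topology

/-- A linear operator `L` on real `n × n` matrices, mapping symmetric matrices to symmetric
matrices, is *resolvent positive* if there is `α₀ ∈ ℝ` such that for every `α > α₀` the
operator `α • id - L`, restricted to symmetric matrices, is bijective and its inverse maps
every symmetric positive semidefinite matrix to a symmetric positive semidefinite matrix. -/
def ResolventPositive {n : ℕ} (L : Matrix (Fin n) (Fin n) ℝ → Matrix (Fin n) (Fin n) ℝ) : Prop :=
  ∃ α₀ : ℝ, ∀ α : ℝ, α₀ < α →
    (∀ Y : Matrix (Fin n) (Fin n) ℝ, Y.IsSymm →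
      ∃! X : Matrix (Fin n) (Fin n) ℝ, X.IsSymm ∧ α • X - L X = Y) ∧
    (∀ X Y : Matrix (Fin n) (Fin n) ℝ, X.IsSymm → α • X - L X = Y → Y.PosSemidef →
      X.PosSemidef)

section Auxiliary

attribute [local instance] Matrix.normedAddCommGroup Matrix.normedSpace

variable {n : ℕ}

lemma myIsHermitian_of_isSymm {M : Matrix (Fin n) (Fin n) ℝ} (h : M.IsSymm) : M.IsHermitian := by
  rwa [Matrix.IsHermitian, Matrix.conjTranspose_eq_transpose_of_trivial]

lemma quad_abs_le (M : Matrix (Fin n) (Fin n) ℝ) (v : Fin n → ℝ) :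
    |v ⬝ᵥ M *ᵥ v| ≤ (n * ‖M‖) * (v ⬝ᵥ v) := by
  have h1 : v ⬝ᵥ M *ᵥ v = ∑ i, ∑ j, v i * (M i j * v j) := by
    simp [dotProduct, Matrix.mulVec, Finset.mul_sum]
  rw [h1]
  calc |∑ i, ∑ j, v i * (M i j * v j)| ≤ ∑ i, ∑ j, |v i| * (|M i j| * |v j|) := by
        refine (Finset.abs_sum_le_sum_abs _ _).trans ?_
        refine Finset.sum_le_sum fun i _ => ?_
        refine (Finset.abs_sum_le_sum_abs _ _).trans ?_
        refine Finset.sum_le_sum fun j _ => ?_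
        rw [abs_mul, abs_mul]
    _ ≤ ∑ i, ∑ j, |v i| * (‖M‖ * |v j|) := by
        refine Finset.sum_le_sum fun i _ => Finset.sum_le_sum fun j _ => ?_
        exact mul_le_mul_of_nonneg_left
          (mul_le_mul_of_nonneg_right M.norm_entry_le_entrywise_sup_norm (abs_nonneg _))
          (abs_nonneg _)
    _ = ‖M‖ * ((∑ i, |v i|) * (∑ i, |v i|)) := by
        rw [Finset.sum_mul_sum, Finset.mul_sum]
        exact Finset.sum_congr rfl fun i _ => by
          rw [Finset.mul_sum]
          exact Finset.sum_congr rfl fun j _ => by ring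
    _ ≤ ‖M‖ * (n * ∑ i, |v i| ^ 2) := by
        have h2 := sq_sum_le_card_mul_sum_sq (s := (Finset.univ : Finset (Fin n)))
          (f := fun i => |v i|)
        simp only [Finset.card_univ, Fintype.card_fin] at h2
        rw [sq] at h2
        exact mul_le_mul_of_nonneg_left h2 (norm_nonneg _)
    _ = (n * ‖M‖) * (v ⬝ᵥ v) := by
        have h3 : ∀ i, |v i| ^ 2 = v i * v i := fun i => by rw [sq_abs, sq]
        simp only [h3, dotProduct]
        ring

lemma cross_pos (L : Matrix (Fin n) (Fin n) ℝ →ₗ[ℝ] Matrix (Fin n) (Fin n) ℝ)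
    (hLres : ResolventPositive (fun M => L M))
    (A : Matrix (Fin n) (Fin n) ℝ) (hAs : A.IsSymm) (hA : A.PosSemidef)
    (v : Fin n → ℝ) (hv : A *ᵥ v = 0) :
    0 ≤ v ⬝ᵥ (L A) *ᵥ v := by
  obtain ⟨α₀, hres⟩ := hLres
  obtain ⟨C, hC0, hLnorm⟩ : ∃ C : ℝ, 0 ≤ C ∧
      ∀ M : Matrix (Fin n) (Fin n) ℝ, ‖L M‖ ≤ C * ‖M‖ := by
    refine ⟨ContinuousLinearMap.hasOpNorm.norm (LinearMap.toContinuousLinearMap L), norm_nonneg _, fun M => ?_⟩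
    have := (LinearMap.toContinuousLinearMap L).le_opNorm M
    exact this
  by_contra hneg
  push_neg at hneg
  obtain ⟨q, hq⟩ : ∃ q : ℝ, v ⬝ᵥ (L A) *ᵥ v = q := ⟨_, rfl⟩
  rw [hq] at hneg
  obtain ⟨w, hw⟩ : ∃ w : ℝ, v ⬝ᵥ v = w := ⟨_, rfl⟩
  have hvv : 0 ≤ w := by
    rw [← hw]; simpa using dotProduct_self_star_nonneg (R := ℝ) v
  obtain ⟨a, ha⟩ : ∃ a : ℝ, ‖A‖ = a := ⟨_, rfl⟩
  have ha0 : 0 ≤ a := ha ▸ norm_nonneg _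
  obtain ⟨D, hD⟩ : ∃ D : ℝ, (n : ℝ) * C * (C * a) * w = D := ⟨_, rfl⟩
  have hD0 : 0 ≤ D := by rw [← hD]; positivity
  have hq0 : 0 < -q := by linarith
  obtain ⟨α, hα⟩ : ∃ α : ℝ, α = max α₀ C + 1 + D / (-q) := ⟨_, rfl⟩
  have hdiv : 0 ≤ D / (-q) := div_nonneg hD0 hq0.le
  have hα₀ : α₀ < α := by
    have h1 : α₀ ≤ max α₀ C := le_max_left _ _
    linarith
  have hαC : C + 1 + D / (-q) ≤ α := by
    have h1 : C ≤ max α₀ C := le_max_right _ _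
    linarith
  have hαC' : C < α := by linarith
  have hαpos : 0 < α := by linarith
  obtain ⟨hbij, hpos⟩ := hres α hα₀
  obtain ⟨B, ⟨hBs, hBeq⟩, -⟩ := hbij A hAs
  have hBpsd : B.PosSemidef := hpos B A hBs hBeq hA
  have hqA : v ⬝ᵥ A *ᵥ v = 0 := by rw [hv, dotProduct_zero]
  have hqB : 0 ≤ v ⬝ᵥ B *ᵥ v := by simpa using hBpsd.dotProduct_mulVec_nonneg v
  have hqLB : 0 ≤ v ⬝ᵥ (L B) *ᵥ v := by
    have h := congrArg (fun M => v ⬝ᵥ M *ᵥ v) hBeq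
    simp only [Matrix.sub_mulVec, Matrix.smul_mulVec, dotProduct_sub,
      dotProduct_smul, smul_eq_mul, hqA] at h
    nlinarith
  have hLB : ‖L B‖ ≤ C * ‖B‖ := hLnorm B
  have hBn0 : 0 ≤ ‖B‖ := norm_nonneg _
  have hBnorm : (α - C) * ‖B‖ ≤ a := by
    have h1 : α • B = A + L B := by rw [← hBeq]; abel
    have h2 : ‖α • B‖ ≤ ‖A‖ + ‖L B‖ := by rw [h1]; exact norm_add_le _ _
    rw [norm_smul, Real.norm_eq_abs, abs_of_pos hαpos, ha] at h2
    nlinarith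
  have key : -q ≤ (n : ℝ) * ‖L (α • B - A)‖ * w := by
    have h1 : v ⬝ᵥ (L (α • B - A)) *ᵥ v = α * (v ⬝ᵥ (L B) *ᵥ v) - q := by
      rw [map_sub, L.map_smul]
      simp only [Matrix.sub_mulVec, Matrix.smul_mulVec, dotProduct_sub,
        dotProduct_smul, smul_eq_mul, hq]
    have h2 := quad_abs_le (L (α • B - A)) v
    rw [hw] at h2
    have h3 : -q ≤ α * (v ⬝ᵥ (L B) *ᵥ v) - q := by nlinarith
    calc -q ≤ v ⬝ᵥ (L (α • B - A)) *ᵥ v := by rw [h1]; exact h3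
      _ ≤ |v ⬝ᵥ (L (α • B - A)) *ᵥ v| := le_abs_self _
      _ ≤ ((n : ℝ) * ‖L (α • B - A)‖) * w := h2
      _ = (n : ℝ) * ‖L (α • B - A)‖ * w := by ring
  have hsub : α • B - A = L B := by rw [← hBeq]; abel
  have hn0 : (0:ℝ) ≤ n := Nat.cast_nonneg n
  have h4 : ‖L (α • B - A)‖ ≤ C * (C * ‖B‖) := by
    rw [hsub]
    calc ‖L (L B)‖ ≤ C * ‖L B‖ := hLnorm _
      _ ≤ C * (C * ‖B‖) := mul_le_mul_of_nonneg_left hLB hC0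
  have hfin : -q ≤ (n : ℝ) * (C * (C * ‖B‖)) * w := by
    have h5 : (n : ℝ) * ‖L (α • B - A)‖ * w ≤ (n : ℝ) * (C * (C * ‖B‖)) * w :=
      mul_le_mul_of_nonneg_right (mul_le_mul_of_nonneg_left h4 hn0) hvv
    linarith
  have hαCpos : 0 < α - C := by linarith
  have hstep : (α - C) * (-q) ≤ D := by
    have h6 : (α - C) * (-q) ≤ (α - C) * ((n : ℝ) * (C * (C * ‖B‖)) * w) :=
      mul_le_mul_of_nonneg_left hfin hαCpos.le
    have h7 : (α - C) * ((n : ℝ) * (C * (C * ‖B‖)) * w)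
        = ((n : ℝ) * C * C * w) * ((α - C) * ‖B‖) := by ring
    have h8 : ((n : ℝ) * C * C * w) * ((α - C) * ‖B‖) ≤ ((n : ℝ) * C * C * w) * a :=
      mul_le_mul_of_nonneg_left hBnorm (by positivity)
    have h9 : ((n : ℝ) * C * C * w) * a = D := by rw [← hD]; ring
    linarith
  have hgt : D < (α - C) * (-q) := by
    have h7 : 1 + D / (-q) ≤ α - C := by linarith
    have h8 : (1 + D / (-q)) * (-q) ≤ (α - C) * (-q) :=
      mul_le_mul_of_nonneg_right h7 hq0.le
    have hqne : q ≠ 0 := ne_of_lt hneg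
    have h9 : (1 + D / (-q)) * (-q) = -q + D := by
      field_simp
      ring
    linarith
  linarith

lemma posdef_of_close {M0 : Matrix (Fin n) (Fin n) ℝ} (h : M0.PosDef) :
    ∃ δ : ℝ, 0 < δ ∧ ∀ M : Matrix (Fin n) (Fin n) ℝ,
      M.IsHermitian → ‖M - M0‖ < δ → M.PosDef := by
  rcases Nat.eq_zero_or_pos n with hn | hn
  · subst hn
    refine ⟨1, one_pos, fun M hM _ => ⟨hM, fun x hx => ?_⟩⟩
    exact absurd (Subsingleton.elim x 0) hx
  haveI : Nonempty (Fin n) := ⟨⟨0, hn⟩⟩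
  have hcont : Continuous fun v : Fin n → ℝ => v ⬝ᵥ M0 *ᵥ v := by
    simp only [dotProduct, Matrix.mulVec]
    exact continuous_finset_sum _ fun i _ =>
      (continuous_apply i).mul (continuous_finset_sum _ fun j _ =>
        continuous_const.mul (continuous_apply j))
  have hSne : (Metric.sphere (0 : Fin n → ℝ) 1).Nonempty := by
    refine ⟨fun _ => 1, ?_⟩
    simp [mem_sphere_zero_iff_norm, pi_norm_const]
  obtain ⟨u, huS, humin⟩ := (isCompact_sphere (0 : Fin n → ℝ) 1).exists_isMinOn hSne
    hcont.continuousOn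
  have hu1 : ‖u‖ = 1 := mem_sphere_zero_iff_norm.mp huS
  have hune : u ≠ 0 := by
    intro h0; rw [h0, norm_zero] at hu1; norm_num at hu1
  have hc : 0 < u ⬝ᵥ M0 *ᵥ u := by
    have := h.dotProduct_mulVec_pos hune
    simpa using this
  obtain ⟨c, hcdef⟩ : ∃ c : ℝ, u ⬝ᵥ M0 *ᵥ u = c := ⟨_, rfl⟩
  rw [hcdef] at hc
  have hlow : ∀ v : Fin n → ℝ, c * ‖v‖ ^ 2 ≤ v ⬝ᵥ M0 *ᵥ v := by
    intro v
    rcases eq_or_ne v 0 with rfl | hv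
    · simp
    · have hvn : 0 < ‖v‖ := norm_pos_iff.mpr hv
      set u' : Fin n → ℝ := ‖v‖⁻¹ • v with hu'
      have hu'S : u' ∈ Metric.sphere (0 : Fin n → ℝ) 1 := by
        rw [mem_sphere_zero_iff_norm, hu', norm_smul, norm_inv, norm_norm,
          inv_mul_cancel₀ hvn.ne']
      have h1 : u ⬝ᵥ M0 *ᵥ u ≤ u' ⬝ᵥ M0 *ᵥ u' := humin hu'S
      have h2 : u' ⬝ᵥ M0 *ᵥ u' = ‖v‖⁻¹ ^ 2 * (v ⬝ᵥ M0 *ᵥ v) := by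
        rw [hu', Matrix.mulVec_smul, dotProduct_smul, smul_dotProduct]
        simp [smul_eq_mul]; ring
      have h3 : c ≤ ‖v‖⁻¹ ^ 2 * (v ⬝ᵥ M0 *ᵥ v) := by
        rw [← h2, ← hcdef]; exact h1
      have h4 := mul_le_mul_of_nonneg_left h3 (by positivity : (0:ℝ) ≤ ‖v‖ ^ 2)
      calc c * ‖v‖ ^ 2 = ‖v‖ ^ 2 * c := by ring
        _ ≤ ‖v‖ ^ 2 * (‖v‖⁻¹ ^ 2 * (v ⬝ᵥ M0 *ᵥ v)) := h4
        _ = v ⬝ᵥ M0 *ᵥ v := by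
            field_simp
  refine ⟨c / (n ^ 2 + 1), by positivity, fun M hM hMd => Matrix.PosDef.of_dotProduct_mulVec_pos hM fun x hx => ?_⟩
  have hxn : 0 < ‖x‖ := norm_pos_iff.mpr hx
  have hq := quad_abs_le (M - M0) x
  have hxx : x ⬝ᵥ x ≤ n * ‖x‖ ^ 2 := by
    have : ∀ i, x i * x i ≤ ‖x‖ ^ 2 := by
      intro i
      have h5 : |x i| ≤ ‖x‖ := by
        have := norm_le_pi_norm x i
        simpa using this
      calc x i * x i = |x i| * |x i| := (abs_mul_abs_self _).symm
        _ ≤ ‖x‖ * ‖x‖ := mul_le_mul h5 h5 (abs_nonneg _) (norm_nonneg _)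
        _ = ‖x‖ ^ 2 := (sq ‖x‖).symm
    calc x ⬝ᵥ x = ∑ i, x i * x i := rfl
      _ ≤ ∑ _i : Fin n, ‖x‖ ^ 2 := Finset.sum_le_sum fun i _ => this i
      _ = n * ‖x‖ ^ 2 := by simp [Finset.sum_const, nsmul_eq_mul]
  have hsplit : x ⬝ᵥ M *ᵥ x = x ⬝ᵥ M0 *ᵥ x + x ⬝ᵥ (M - M0) *ᵥ x := by
    simp [Matrix.sub_mulVec, dotProduct_sub]
  have hd0 : 0 ≤ ‖M - M0‖ := norm_nonneg _
  have hn0 : (0:ℝ) ≤ n := Nat.cast_nonneg n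
  have hxx0 : 0 ≤ x ⬝ᵥ x := by simpa using dotProduct_self_star_nonneg (R := ℝ) x
  have hb : |x ⬝ᵥ (M - M0) *ᵥ x| ≤ (n : ℝ) ^ 2 * ‖M - M0‖ * ‖x‖ ^ 2 := by
    calc |x ⬝ᵥ (M - M0) *ᵥ x| ≤ (n * ‖M - M0‖) * (x ⬝ᵥ x) := hq
      _ ≤ (n * ‖M - M0‖) * ((n : ℝ) * ‖x‖ ^ 2) :=
          mul_le_mul_of_nonneg_left hxx (by positivity)
      _ = (n : ℝ) ^ 2 * ‖M - M0‖ * ‖x‖ ^ 2 := by ring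
  have hfinal : 0 < x ⬝ᵥ M *ᵥ x := by
    have h6 := hlow x
    have h7 : -((n : ℝ) ^ 2 * ‖M - M0‖ * ‖x‖ ^ 2) ≤ x ⬝ᵥ (M - M0) *ᵥ x :=
      neg_le_of_abs_le hb
    have h10 : ‖M - M0‖ * ((n:ℝ) ^ 2 + 1) < c :=
      (lt_div_iff₀ (by positivity)).mp hMd
    have h12 : (n:ℝ) ^ 2 * ‖M - M0‖ < c := by nlinarith
    have h11 : (n:ℝ) ^ 2 * ‖M - M0‖ * ‖x‖ ^ 2 < c * ‖x‖ ^ 2 :=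
      mul_lt_mul_of_pos_right h12 (by positivity)
    linarith
  simpa using hfinal

end Auxiliary

section Main

attribute [local instance] Matrix.normedAddCommGroup Matrix.normedSpace

/-- Matrix Gronwall comparison lemma: if `X' ≤ L(X)`, `Z' = L(Z)`, both trajectories consist
of positive semidefinite symmetric matrices, and `X 0 ≤ Z 0`, then `X t ≤ Z t` on `[0, T]`. -/
theorem gronwall_matrix_comparison {n : ℕ}
    (L : Matrix (Fin n) (Fin n) ℝ →ₗ[ℝ] Matrix (Fin n) (Fin n) ℝ)
    (hLsymm : ∀ M : Matrix (Fin n) (Fin n) ℝ, M.IsSymm → (L M).IsSymm)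
    (hLres : ResolventPositive (fun M => L M))
    (T : ℝ) (hT : 0 < T)
    (X Z X' Z' : ℝ → Matrix (Fin n) (Fin n) ℝ)
    (hXsymm : ∀ t ∈ Icc (0 : ℝ) T, (X t).IsSymm)
    (hZsymm : ∀ t ∈ Icc (0 : ℝ) T, (Z t).IsSymm)
    (hXderiv : ∀ t ∈ Icc (0 : ℝ) T, ∀ i j,
      HasDerivWithinAt (fun s => X s i j) (X' t i j) (Icc (0 : ℝ) T) t)
    (hZderiv : ∀ t ∈ Icc (0 : ℝ) T, ∀ i j,
      HasDerivWithinAt (fun s => Z s i j) (Z' t i j) (Icc (0 : ℝ) T) t)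
    (hXpos : ∀ t ∈ Icc (0 : ℝ) T, (X t).PosSemidef)
    (hZpos : ∀ t ∈ Icc (0 : ℝ) T, (Z t).PosSemidef)
    (hXineq : ∀ t ∈ Icc (0 : ℝ) T, (L (X t) - X' t).PosSemidef)
    (hZeq : ∀ t ∈ Icc (0 : ℝ) T, Z' t = L (Z t))
    (h0 : (Z 0 - X 0).PosSemidef) :
    ∀ t ∈ Icc (0 : ℝ) T, (Z t - X t).PosSemidef := by
  obtain ⟨K, hK⟩ : ∃ K : ℝ, K = (n : ℝ) * ‖L (1 : Matrix (Fin n) (Fin n) ℝ)‖ + 1 := ⟨_, rfl⟩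
  -- Q := K • 1 - L 1 has positive definite quadratic form
  have hQpos : ∀ v : Fin n → ℝ, v ≠ 0 →
      0 < v ⬝ᵥ (K • (1 : Matrix (Fin n) (Fin n) ℝ) - L 1) *ᵥ v := by
    intro v hv
    have h3 : 0 < v ⬝ᵥ v := by
      have := (dotProduct_self_star_pos_iff (R := ℝ) (v := v)).mpr hv
      simpa using this
    have h1 : v ⬝ᵥ (K • (1 : Matrix (Fin n) (Fin n) ℝ)) *ᵥ v = K * (v ⬝ᵥ v) := by
      rw [Matrix.smul_mulVec, Matrix.one_mulVec, dotProduct_smul, smul_eq_mul]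
    have h2 := quad_abs_le (L (1 : Matrix (Fin n) (Fin n) ℝ)) v
    have h4 : v ⬝ᵥ (K • (1 : Matrix (Fin n) (Fin n) ℝ) - L 1) *ᵥ v
        = K * (v ⬝ᵥ v) - v ⬝ᵥ (L 1) *ᵥ v := by
      rw [Matrix.sub_mulVec, dotProduct_sub, h1]
    rw [h4, hK]
    have h5 : v ⬝ᵥ (L 1) *ᵥ v ≤ ((n : ℝ) * ‖L (1 : Matrix (Fin n) (Fin n) ℝ)‖) * (v ⬝ᵥ v) :=
      (le_abs_self _).trans h2
    nlinarith
  -- the key positivity claim for perturbed difference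
  have key : ∀ ε : ℝ, 0 < ε → ∀ t ∈ Icc (0 : ℝ) T,
      (Z t - X t + (ε * Real.exp (K * t)) • (1 : Matrix (Fin n) (Fin n) ℝ)).PosDef := by
    intro ε hε
    obtain ⟨W, hWdef⟩ : ∃ W : ℝ → Matrix (Fin n) (Fin n) ℝ,
        W = fun s => Z s - X s + (ε * Real.exp (K * s)) • (1 : Matrix (Fin n) (Fin n) ℝ) :=
      ⟨_, rfl⟩
    obtain ⟨E, hEdef⟩ : ∃ E : ℝ → Matrix (Fin n) (Fin n) ℝ,
        E = fun s => Z' s - X' s + (ε * K * Real.exp (K * s)) • (1 : Matrix (Fin n) (Fin n) ℝ) :=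
      ⟨_, rfl⟩
    suffices hgoal : ∀ t ∈ Icc (0:ℝ) T, (W t).PosDef by
      intro t ht
      have h := hgoal t ht
      rw [hWdef] at h
      simpa using h
    have hWsymm : ∀ t ∈ Icc (0 : ℝ) T, (W t).IsSymm := by
      intro t ht
      rw [hWdef]
      exact ((hZsymm t ht).sub (hXsymm t ht)).add ((Matrix.isSymm_one).smul _)
    have hWherm : ∀ t ∈ Icc (0 : ℝ) T, (W t).IsHermitian :=
      fun t ht => myIsHermitian_of_isSymm (hWsymm t ht)
    have hWq : ∀ (t : ℝ) (v : Fin n → ℝ), v ⬝ᵥ W t *ᵥ v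
        = v ⬝ᵥ (Z t - X t) *ᵥ v + (ε * Real.exp (K * t)) * (v ⬝ᵥ v) := by
      intro t v
      rw [hWdef]
      simp [Matrix.add_mulVec, Matrix.smul_mulVec, Matrix.one_mulVec,
        dotProduct_add, dotProduct_smul, smul_eq_mul]
    have hWderiv : ∀ t ∈ Icc (0 : ℝ) T, ∀ i j,
        HasDerivWithinAt (fun s => W s i j) (E t i j) (Icc (0 : ℝ) T) t := by
      intro t ht i j
      have h1 : HasDerivAt (fun s : ℝ => K * s) K t := by
        simpa using (hasDerivAt_id t).const_mul K
      have he : HasDerivAt (fun s : ℝ => ε * Real.exp (K * s))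
          (ε * (Real.exp (K * t) * K)) t := (h1.exp).const_mul ε
      have h2 := ((hZderiv t ht i j).sub (hXderiv t ht i j)).add
        ((he.hasDerivWithinAt).mul_const ((1 : Matrix (Fin n) (Fin n) ℝ) i j))
      have hfun : (fun s => W s i j)
          = fun s => (Z s i j - X s i j)
            + (ε * Real.exp (K * s)) * (1 : Matrix (Fin n) (Fin n) ℝ) i j := by
        funext s
        rw [hWdef]
        simp [Matrix.add_apply, Matrix.sub_apply, Matrix.smul_apply, smul_eq_mul]
      have hval : E t i j = (Z' t i j - X' t i j)
          + ε * (Real.exp (K * t) * K) * (1 : Matrix (Fin n) (Fin n) ℝ) i j := by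
        rw [hEdef]
        simp only [Matrix.add_apply, Matrix.sub_apply, Matrix.smul_apply, smul_eq_mul]
        ring
      rw [hfun, hval]
      exact h2
    have hWcont : ∀ i j, ContinuousOn (fun s => W s i j) (Icc (0 : ℝ) T) :=
      fun i j t ht => (hWderiv t ht i j).continuousWithinAt
    have hfv : ∀ v : Fin n → ℝ, ContinuousOn (fun s => v ⬝ᵥ W s *ᵥ v) (Icc (0 : ℝ) T) := by
      intro v
      have hrw : (fun s => v ⬝ᵥ W s *ᵥ v) = fun s => ∑ i, ∑ j, v i * (W s i j * v j) := by
        funext s; simp [dotProduct, Matrix.mulVec, Finset.mul_sum]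
      rw [hrw]
      refine continuousOn_finset_sum _ fun i _ => continuousOn_finset_sum _ fun j _ => ?_
      exact continuousOn_const.mul ((hWcont i j).mul continuousOn_const)
    have hWeq : ∀ t ∈ Icc (0 : ℝ) T, E t
        = L (W t) + (L (X t) - X' t)
          + (ε * Real.exp (K * t)) • (K • (1 : Matrix (Fin n) (Fin n) ℝ) - L 1) := by
      intro t ht
      have h1 : L (W t) = L (Z t) - L (X t) + (ε * Real.exp (K * t)) • L 1 := by
        rw [hWdef]
        simp only [map_add, map_sub, _root_.map_smul]
      simp only [hEdef]
      rw [h1, hZeq t ht]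
      module
    have hW0 : (W 0).PosDef := by
      refine Matrix.PosDef.of_dotProduct_mulVec_pos (hWherm 0 ⟨le_refl 0, hT.le⟩) fun v hv => ?_
      have h1 : 0 ≤ v ⬝ᵥ (Z 0 - X 0) *ᵥ v := by simpa using h0.dotProduct_mulVec_nonneg v
      have h3 : 0 < v ⬝ᵥ v := by
        have := (dotProduct_self_star_pos_iff (R := ℝ) (v := v)).mpr hv
        simpa using this
      have h2 := hWq 0 v
      have hexp : 0 < ε * Real.exp (K * 0) := by positivity
      simp only [star_trivial]
      rw [h2]
      nlinarith
    -- main contradiction argument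
    by_contra hcon
    push_neg at hcon
    obtain ⟨t₁, ht₁, hnd⟩ := hcon
    have hSne : {s : ℝ | s ∈ Icc (0 : ℝ) T ∧ ¬ (W s).PosDef}.Nonempty := ⟨t₁, ht₁, hnd⟩
    have hSbd : BddBelow {s : ℝ | s ∈ Icc (0 : ℝ) T ∧ ¬ (W s).PosDef} :=
      ⟨0, fun s hs => hs.1.1⟩
    obtain ⟨τ, hτdef⟩ : ∃ τ : ℝ, τ = sInf {s : ℝ | s ∈ Icc (0 : ℝ) T ∧ ¬ (W s).PosDef} :=
      ⟨_, rfl⟩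
    have hτ0 : 0 ≤ τ := hτdef ▸ le_csInf hSne fun s hs => hs.1.1
    have hτT : τ ≤ T := by
      rw [hτdef]
      exact (csInf_le hSbd ⟨ht₁, hnd⟩).trans ht₁.2
    have hτmem : τ ∈ Icc (0 : ℝ) T := ⟨hτ0, hτT⟩
    have hpre : ∀ s ∈ Icc (0 : ℝ) T, s < τ → (W s).PosDef := by
      intro s hs hlt
      by_contra hnd'
      have := csInf_le hSbd ⟨hs, hnd'⟩
      rw [← hτdef] at this
      exact absurd this (not_le.mpr hlt)
    have hτpsd : (W τ).PosSemidef := by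
      refine Matrix.PosSemidef.of_dotProduct_mulVec_nonneg (hWherm τ hτmem) fun v => ?_
      simp only [star_trivial]
      rcases eq_or_lt_of_le hτ0 with heq | hpos
      · rcases eq_or_ne v 0 with rfl | hv
        · simp
        · rw [← heq]
          exact le_of_lt (by simpa using hW0.dotProduct_mulVec_pos hv)
      · have hne : (0:ℝ) ≠ τ := ne_of_lt hpos
        have hcl : τ ∈ closure (Ico (0:ℝ) τ) := by
          rw [closure_Ico hne]
          exact ⟨hτ0, le_refl τ⟩
        haveI : (𝓝[Ico (0:ℝ) τ] τ).NeBot := mem_closure_iff_nhdsWithin_neBot.mp hcl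
        have hsub : Ico (0:ℝ) τ ⊆ Icc (0:ℝ) T :=
          fun s hs => ⟨hs.1, (hs.2.trans_le hτT).le⟩
        have htends : Tendsto (fun s => v ⬝ᵥ W s *ᵥ v) (𝓝[Ico (0:ℝ) τ] τ)
            (𝓝 (v ⬝ᵥ W τ *ᵥ v)) :=
          ((hfv v) τ hτmem).tendsto.mono_left (nhdsWithin_mono _ hsub)
        refine ge_of_tendsto htends (eventually_nhdsWithin_of_forall fun s hs => ?_)
        have hpd := hpre s (hsub hs) hs.2
        simpa using hpd.posSemidef.dotProduct_mulVec_nonneg v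
    have hτS : ¬ (W τ).PosDef := by
      intro hpd
      obtain ⟨δ, hδ, hδprop⟩ := posdef_of_close hpd
      have hev : ∀ᶠ s in 𝓝[Icc (0:ℝ) T] τ, (W s).PosDef := by
        have hev1 : ∀ᶠ s in 𝓝[Icc (0:ℝ) T] τ, ∀ i j, dist (W s i j) (W τ i j) < δ := by
          rw [eventually_all]
          intro i
          rw [eventually_all]
          intro j
          exact (Metric.tendsto_nhds.mp ((hWcont i j) τ hτmem).tendsto) δ hδ
        have hev2 : ∀ᶠ s in 𝓝[Icc (0:ℝ) T] τ, s ∈ Icc (0:ℝ) T :=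
          eventually_mem_nhdsWithin
        filter_upwards [hev1, hev2] with s hs1 hs2
        refine hδprop (W s) (hWherm s hs2) ?_
        rw [Matrix.norm_lt_iff hδ]
        intro i
        intro j
        have := hs1 i j
        rw [Real.dist_eq] at this
        simpa [Matrix.sub_apply] using this
      obtain ⟨θ, hθ, hθprop⟩ := Metric.mem_nhdsWithin_iff.mp hev
      have hlt : sInf {s : ℝ | s ∈ Icc (0 : ℝ) T ∧ ¬ (W s).PosDef} < τ + θ := by
        rw [← hτdef]; linarith
      obtain ⟨s, hsS, hsl⟩ := exists_lt_of_csInf_lt hSne hlt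
      have hsτ : τ ≤ s := by
        have := csInf_le hSbd hsS
        rw [← hτdef] at this; exact this
      have hball : s ∈ Metric.ball τ θ := by
        rw [Metric.mem_ball, Real.dist_eq, abs_of_nonneg (by linarith)]
        linarith
      exact hsS.2 (hθprop ⟨hball, hsS.1⟩)
    have hτpos : 0 < τ := by
      rcases eq_or_lt_of_le hτ0 with heq | hpos
      · exact absurd (heq ▸ hW0) hτS
      · exact hpos
    obtain ⟨v, hvne, hvq⟩ : ∃ v, v ≠ 0 ∧ v ⬝ᵥ W τ *ᵥ v ≤ 0 := by
      by_contra hno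
      push_neg at hno
      refine hτS (Matrix.PosDef.of_dotProduct_mulVec_pos (hWherm τ hτmem) fun v hv => ?_)
      simpa using hno v hv
    have hvq0 : v ⬝ᵥ W τ *ᵥ v = 0 := le_antisymm hvq (by simpa using hτpsd.dotProduct_mulVec_nonneg v)
    have hker : W τ *ᵥ v = 0 := by
      have h := hτpsd.dotProduct_mulVec_zero_iff v
      simp only [star_trivial] at h
      exact h.mp hvq0
    -- positivity of the derivative value
    have hd1 : 0 ≤ v ⬝ᵥ (L (W τ)) *ᵥ v :=
      cross_pos L hLres (W τ) (hWsymm τ hτmem) hτpsd v hker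
    have hd2 : 0 ≤ v ⬝ᵥ (L (X τ) - X' τ) *ᵥ v := by simpa using (hXineq τ hτmem).dotProduct_mulVec_nonneg v
    have hd3 : 0 < v ⬝ᵥ (K • (1 : Matrix (Fin n) (Fin n) ℝ) - L 1) *ᵥ v := hQpos v hvne
    have hd : 0 < v ⬝ᵥ (E τ) *ᵥ v := by
      rw [hWeq τ hτmem]
      have hexp : 0 < ε * Real.exp (K * τ) := by positivity
      simp only [Matrix.add_mulVec, Matrix.smul_mulVec, dotProduct_add,
        dotProduct_smul, smul_eq_mul]
      nlinarith
    -- derivative of the quadratic form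
    have hfd : HasDerivWithinAt (fun s => v ⬝ᵥ W s *ᵥ v) (v ⬝ᵥ (E τ) *ᵥ v)
        (Icc (0 : ℝ) T) τ := by
      have hrw : (fun s => v ⬝ᵥ W s *ᵥ v) = fun s => ∑ i, ∑ j, v i * (W s i j * v j) := by
        funext s; simp [dotProduct, Matrix.mulVec, Finset.mul_sum]
      have hrw2 : v ⬝ᵥ (E τ) *ᵥ v = ∑ i, ∑ j, v i * (E τ i j * v j) := by
        simp [dotProduct, Matrix.mulVec, Finset.mul_sum]
      rw [hrw, hrw2]
      refine HasDerivWithinAt.fun_sum fun i _ => HasDerivWithinAt.fun_sum fun j _ => ?_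
      exact ((hWderiv τ hτmem i j).mul_const (v j)).const_mul (v i)
    -- slope argument: derivative at a left endpoint minimum is ≤ 0
    have hne : (0:ℝ) ≠ τ := ne_of_lt hτpos
    have hcl : τ ∈ closure (Ico (0:ℝ) τ) := by
      rw [closure_Ico hne]; exact ⟨hτ0, le_refl τ⟩
    haveI : (𝓝[Ico (0:ℝ) τ] τ).NeBot := mem_closure_iff_nhdsWithin_neBot.mp hcl
    have hsub2 : Ico (0:ℝ) τ ⊆ Icc (0:ℝ) T \ {τ} := fun s hs =>
      ⟨⟨hs.1, (hs.2.trans_le hτT).le⟩, ne_of_lt hs.2⟩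
    have hslope := hasDerivWithinAt_iff_tendsto_slope.mp hfd
    have hslope' := hslope.mono_left (nhdsWithin_mono _ hsub2)
    have hle : v ⬝ᵥ (E τ) *ᵥ v ≤ 0 := by
      refine le_of_tendsto hslope' (eventually_nhdsWithin_of_forall fun s hs => ?_)
      have hpd := hpre s ⟨hs.1, (hs.2.trans_le hτT).le⟩ hs.2
      have hfs : 0 < v ⬝ᵥ W s *ᵥ v := by simpa using hpd.dotProduct_mulVec_pos hvne
      rw [slope_def_field, hvq0]
      have hden : s - τ < 0 := by linarith [hs.2]
      apply div_nonpos_of_nonneg_of_nonpos <;> linarith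
    linarith
  -- conclude positive semidefiniteness by letting ε → 0
  intro t ht
  refine Matrix.PosSemidef.of_dotProduct_mulVec_nonneg (myIsHermitian_of_isSymm ((hZsymm t ht).sub (hXsymm t ht))) fun v => ?_
  simp only [star_trivial]
  by_contra hneg
  push_neg at hneg
  obtain ⟨m, hm⟩ : ∃ m : ℝ, m = Real.exp (K * t) * (v ⬝ᵥ v) := ⟨_, rfl⟩
  have hvv : 0 ≤ v ⬝ᵥ v := by simpa using dotProduct_self_star_nonneg (R := ℝ) v
  have hm0 : 0 ≤ m := by rw [hm]; positivity
  obtain ⟨q, hq⟩ : ∃ q : ℝ, v ⬝ᵥ (Z t - X t) *ᵥ v = q := ⟨_, rfl⟩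
  rw [hq] at hneg
  have hε : (0:ℝ) < -q / (m + 1) := by
    apply div_pos (by linarith) (by linarith)
  have hpd := key (-q / (m + 1)) hε t ht
  have hv0 : v ≠ 0 := by
    intro h0
    rw [h0] at hq
    simp at hq
    rw [← hq] at hneg
    exact absurd hneg (lt_irrefl 0)
  have h1 : 0 < v ⬝ᵥ (Z t - X t + ((-q / (m + 1)) * Real.exp (K * t)) •
      (1 : Matrix (Fin n) (Fin n) ℝ)) *ᵥ v := by simpa using hpd.dotProduct_mulVec_pos hv0
  have h2 : v ⬝ᵥ (Z t - X t + ((-q / (m + 1)) * Real.exp (K * t)) •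
      (1 : Matrix (Fin n) (Fin n) ℝ)) *ᵥ v
      = q + (-q / (m + 1)) * m := by
    rw [Matrix.add_mulVec, Matrix.smul_mulVec, Matrix.one_mulVec, dotProduct_add,
      dotProduct_smul, smul_eq_mul, hq, hm]
    ring
  rw [h2] at h1
  have h3 : (-q / (m + 1)) * m ≤ -q := by
    rw [div_mul_eq_mul_div, div_le_iff₀ (by linarith : (0:ℝ) < m + 1)]
    nlinarith
  linarith

end Main
end

section
/- Let L be a resolvent positive linear operator on the space of real symmetric n×n matrices, and let T > 0. Suppose Y : [0,T] → (symmetric n×n real matrices) is differentiable, Y(0) is positive semidefinite, and for every t ∈ [0,T] the matrix Y'(t) − L(Y(t)) is positive semidefinite. Then Y(t) is positive semidefinite for every t ∈ [0,T]. -/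
open Matrix Set

section Aux

open Filter Topology

attribute [local instance] Matrix.normedAddCommGroup Matrix.normedSpace

private lemma quad_bound_norm {n : ℕ} (M : Matrix (Fin n) (Fin n) ℝ) (v : Fin n → ℝ) :
    |v ⬝ᵥ M *ᵥ v| ≤ (∑ i, |v i|)^2 * ‖M‖ := by
  have h : v ⬝ᵥ M *ᵥ v = ∑ i, ∑ j, v i * M i j * v j := by
    simp [dotProduct, mulVec, Finset.mul_sum, mul_assoc]
  have key : ∀ i j, |v i * M i j * v j| ≤ |v i| * |v j| * ‖M‖ := by
    intro i j
    rw [abs_mul, abs_mul]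
    calc |v i| * |M i j| * |v j| = |v i| * |v j| * |M i j| := by ring
    _ ≤ |v i| * |v j| * ‖M‖ :=
        mul_le_mul_of_nonneg_left M.norm_entry_le_entrywise_sup_norm (by positivity)
  calc |v ⬝ᵥ M *ᵥ v| ≤ ∑ i, ∑ j, |v i * M i j * v j| := by
        rw [h]
        exact (Finset.abs_sum_le_sum_abs _ _).trans
          (Finset.sum_le_sum fun i _ => Finset.abs_sum_le_sum_abs _ _)
  _ ≤ ∑ i, ∑ j, |v i| * |v j| * ‖M‖ :=
        Finset.sum_le_sum fun i _ => Finset.sum_le_sum fun j _ => key i j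
  _ = (∑ i, |v i|)^2 * ‖M‖ := by
        simp only [← Finset.sum_mul, ← Finset.mul_sum]
        ring

private lemma isSymm_of_posSemidef {n : ℕ} {X : Matrix (Fin n) (Fin n) ℝ}
    (hX : X.PosSemidef) : X.IsSymm := by
  have h := hX.1
  ext i j
  have := congrFun (congrFun h i) j
  simpa [Matrix.conjTranspose_apply] using this

private lemma quasimonotone {n : ℕ}
    (L : Matrix (Fin n) (Fin n) ℝ →ₗ[ℝ] Matrix (Fin n) (Fin n) ℝ)
    (hLres : ResolventPositive (fun M => L M))
    (X : Matrix (Fin n) (Fin n) ℝ) (hX : X.PosSemidef)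
    (v : Fin n → ℝ) (hv : X *ᵥ v = 0) :
    0 ≤ v ⬝ᵥ (L X) *ᵥ v := by
  obtain ⟨C, hC0, hC⟩ : ∃ C : ℝ, 0 < C ∧ ∀ M, ‖L M‖ ≤ C * ‖M‖ := by
    let Lc : Matrix (Fin n) (Fin n) ℝ →L[ℝ] Matrix (Fin n) (Fin n) ℝ :=
      ⟨L, L.continuous_of_finiteDimensional⟩
    exact Lc.isBoundedLinearMap.bound
  obtain ⟨α₀, hres⟩ := hLres
  -- it suffices to prove the bound up to every δ > 0
  by_contra hneg
  push_neg at hneg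
  set δ : ℝ := -(v ⬝ᵥ (L X) *ᵥ v) / 2 with hδdef
  have hδ : 0 < δ := by simp only [hδdef]; linarith
  set W : ℝ := (∑ i, |v i|)^2 with hW
  have hW0 : 0 ≤ W := by positivity
  set E : ℝ := W * C * (2 * C * ‖X‖) with hE
  have hE0 : 0 ≤ E := by positivity
  set α : ℝ := max (max (α₀ + 1) (2 * C + 1)) ((E + 1) / δ) with hα
  have hαgt : α₀ < α :=
    lt_of_lt_of_le (by linarith) ((le_max_left _ _).trans (le_max_left _ _))
  have hα2C : 2 * C + 1 ≤ α := (le_max_right _ _).trans (le_max_left _ _)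
  have hα0 : 0 < α := by linarith
  have hαE : E + 1 ≤ δ * α := by
    rw [← div_le_iff₀' hδ]
    exact le_max_right _ _
  obtain ⟨h1, h2⟩ := hres α hαgt
  have hXsymm : X.IsSymm := isSymm_of_posSemidef hX
  have hαXsymm : (α • X).IsSymm := by
    unfold Matrix.IsSymm
    rw [Matrix.transpose_smul, hXsymm]
  have hαXpsd : (α • X).PosSemidef := by
    refine PosSemidef.of_dotProduct_mulVec_nonneg ?_ fun x => ?_
    · unfold Matrix.IsHermitian
      rw [Matrix.conjTranspose_smul, hX.1]
      simp
    · have := hX.dotProduct_mulVec_nonneg x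
      have h' : star x ⬝ᵥ (α • X) *ᵥ x = α * (star x ⬝ᵥ X *ᵥ x) := by
        rw [Matrix.smul_mulVec, dotProduct_smul, smul_eq_mul]
      rw [h']
      have : (0:ℝ) ≤ star x ⬝ᵥ X *ᵥ x := hX.dotProduct_mulVec_nonneg x
      positivity
  obtain ⟨Xa, ⟨hXas, hXae⟩, -⟩ := h1 (α • X) hαXsymm
  have hXapsd : Xa.PosSemidef := h2 Xa (α • X) hXas hXae hαXpsd
  -- rearrangement
  have hLXa : L Xa = α • (Xa - X) := by
    have := hXae
    rw [smul_sub]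
    calc L Xa = α • Xa - (α • Xa - L Xa) := by abel
    _ = α • Xa - α • X := by rw [this]
  have hdiff : Xa - X = α⁻¹ • L Xa := by
    rw [hLXa, smul_smul, inv_mul_cancel₀ (ne_of_gt hα0), one_smul]
  -- norm bounds
  have hXanorm : ‖Xa‖ ≤ 2 * ‖X‖ := by
    have h3 : ‖Xa - X‖ ≤ α⁻¹ * (C * ‖Xa‖) := by
      rw [hdiff, norm_smul]
      simp only [norm_inv, Real.norm_eq_abs, abs_of_pos hα0]
      exact mul_le_mul_of_nonneg_left (hC Xa) (by positivity)
    have h4 : ‖Xa‖ ≤ ‖X‖ + ‖Xa - X‖ := by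
      calc ‖Xa‖ = ‖X + (Xa - X)‖ := by rw [add_sub_cancel]
      _ ≤ ‖X‖ + ‖Xa - X‖ := norm_add_le _ _
    have h5 : α⁻¹ * C ≤ 1 / 2 := by
      rw [inv_mul_le_iff₀ hα0]
      linarith
    have h6 : α⁻¹ * (C * ‖Xa‖) ≤ (1/2) * ‖Xa‖ := by
      rw [← mul_assoc]
      exact mul_le_mul_of_nonneg_right h5 (norm_nonneg _)
    linarith
  have hdiffnorm : ‖Xa - X‖ ≤ 2 * C * ‖X‖ / α := by
    rw [hdiff, norm_smul]
    simp only [norm_inv, Real.norm_eq_abs, abs_of_pos hα0]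
    rw [div_eq_inv_mul]
    refine mul_le_mul_of_nonneg_left ?_ (by positivity)
    calc ‖L Xa‖ ≤ C * ‖Xa‖ := hC Xa
    _ ≤ C * (2 * ‖X‖) := mul_le_mul_of_nonneg_left hXanorm (le_of_lt hC0)
    _ = 2 * C * ‖X‖ := by ring
  -- the quadratic form of L Xa is nonnegative
  have hXv : v ⬝ᵥ X *ᵥ v = 0 := by rw [hv, dotProduct_zero]
  have hqXa : v ⬝ᵥ (L Xa) *ᵥ v = α * (v ⬝ᵥ Xa *ᵥ v) := by
    rw [hLXa, Matrix.smul_mulVec, dotProduct_smul, smul_eq_mul, Matrix.sub_mulVec,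
      dotProduct_sub, hXv, sub_zero]
  have hq0 : 0 ≤ v ⬝ᵥ (L Xa) *ᵥ v := by
    rw [hqXa]
    have := hXapsd.dotProduct_mulVec_nonneg v
    rw [star_trivial] at this
    positivity
  -- closeness of quadratic forms
  have hclose : |v ⬝ᵥ (L Xa) *ᵥ v - v ⬝ᵥ (L X) *ᵥ v| ≤ δ := by
    have heq : v ⬝ᵥ (L Xa) *ᵥ v - v ⬝ᵥ (L X) *ᵥ v = v ⬝ᵥ (L Xa - L X) *ᵥ v := by
      rw [Matrix.sub_mulVec, dotProduct_sub]
    rw [heq]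
    calc |v ⬝ᵥ (L Xa - L X) *ᵥ v| ≤ W * ‖L Xa - L X‖ := quad_bound_norm _ v
    _ = W * ‖L (Xa - X)‖ := by rw [map_sub]
    _ ≤ W * (C * ‖Xa - X‖) := mul_le_mul_of_nonneg_left (hC _) hW0
    _ ≤ W * (C * (2 * C * ‖X‖ / α)) :=
        mul_le_mul_of_nonneg_left (mul_le_mul_of_nonneg_left hdiffnorm (le_of_lt hC0)) hW0
    _ = E / α := by rw [hE]; ring
    _ ≤ δ := by rw [div_le_iff₀ hα0]; nlinarith
  have habs := abs_le.1 hclose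
  have : v ⬝ᵥ (L X) *ᵥ v ≥ -δ := by linarith
  simp only [hδdef] at this
  linarith [hneg]


private lemma quad_bound_unit {n : ℕ} (M : Matrix (Fin n) (Fin n) ℝ) (v : Fin n → ℝ)
    (hv : v ⬝ᵥ v = 1) :
    v ⬝ᵥ M *ᵥ v ≤ ∑ i, ∑ j, |M i j| := by
  have hvi : ∀ i, |v i| ≤ 1 := by
    intro i
    rw [abs_le_one_iff_mul_self_le_one]
    calc v i * v i ≤ ∑ j, v j * v j :=
          Finset.single_le_sum (f := fun j => v j * v j)
            (fun j _ => mul_self_nonneg _) (Finset.mem_univ i)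
    _ = 1 := hv
  have h : v ⬝ᵥ M *ᵥ v = ∑ i, ∑ j, v i * M i j * v j := by
    simp [dotProduct, mulVec, Finset.mul_sum, mul_assoc]
  rw [h]
  refine Finset.sum_le_sum fun i _ => Finset.sum_le_sum fun j _ => ?_
  calc v i * M i j * v j ≤ |v i * M i j * v j| := le_abs_self _
  _ = |v i| * |M i j| * |v j| := by rw [abs_mul, abs_mul]
  _ ≤ 1 * |M i j| * 1 := by
      apply mul_le_mul (mul_le_mul (hvi i) le_rfl (abs_nonneg _) zero_le_one) (hvi j)
        (abs_nonneg _)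
      positivity
  _ = |M i j| := by ring

private lemma expand_quad {n : ℕ} (M : Matrix (Fin n) (Fin n) ℝ) (v : Fin n → ℝ) :
    v ⬝ᵥ M *ᵥ v = ∑ i, ∑ j, v i * M i j * v j := by
  simp [dotProduct, mulVec, Finset.mul_sum, mul_assoc]

private lemma unit_vec {n : ℕ} (x : Fin n → ℝ) (hx : x ≠ 0) :
    ∃ u : Fin n → ℝ, u ⬝ᵥ u = 1 ∧ ∀ M : Matrix (Fin n) (Fin n) ℝ,
      x ⬝ᵥ M *ᵥ x = (x ⬝ᵥ x) * (u ⬝ᵥ M *ᵥ u) := by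
  have hnn : 0 ≤ x ⬝ᵥ x := by
    rw [dotProduct]
    exact Finset.sum_nonneg fun i _ => mul_self_nonneg (x i)
  have hxx : 0 < x ⬝ᵥ x := by
    rcases lt_or_eq_of_le hnn with h | h
    · exact h
    · exact absurd (dotProduct_self_eq_zero.1 h.symm) hx
  set c := Real.sqrt (x ⬝ᵥ x) with hc
  have hc0 : 0 < c := Real.sqrt_pos.2 hxx
  have hcc : c * c = x ⬝ᵥ x := Real.mul_self_sqrt hxx.le
  refine ⟨c⁻¹ • x, ?_, fun M => ?_⟩
  · rw [smul_dotProduct, dotProduct_smul, smul_eq_mul, smul_eq_mul]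
    field_simp
    linear_combination hcc.symm
  · rw [smul_dotProduct, Matrix.mulVec_smul, dotProduct_smul, smul_eq_mul, smul_eq_mul]
    rw [← hcc]
    field_simp

private lemma isHermitian_of_isSymm' {n : ℕ} {M : Matrix (Fin n) (Fin n) ℝ}
    (h : M.IsSymm) : M.IsHermitian := by
  ext i j
  have := congrFun (congrFun h i) j
  simpa [Matrix.conjTranspose_apply, Matrix.transpose_apply] using this

private lemma key_claim {n : ℕ}
    (L : Matrix (Fin n) (Fin n) ℝ →ₗ[ℝ] Matrix (Fin n) (Fin n) ℝ)
    (hQM : ∀ X : Matrix (Fin n) (Fin n) ℝ, X.PosSemidef → ∀ v : Fin n → ℝ,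
      X *ᵥ v = 0 → 0 ≤ v ⬝ᵥ (L X) *ᵥ v)
    (T : ℝ) (hT : 0 < T)
    (Y Y' : ℝ → Matrix (Fin n) (Fin n) ℝ)
    (hYsymm : ∀ t ∈ Icc (0 : ℝ) T, (Y t).IsSymm)
    (hYderiv : ∀ t ∈ Icc (0 : ℝ) T, ∀ i j,
      HasDerivWithinAt (fun s => Y s i j) (Y' t i j) (Icc (0 : ℝ) T) t)
    (h0 : (Y 0).PosSemidef)
    (hineq : ∀ t ∈ Icc (0 : ℝ) T, (Y' t - L (Y t)).PosSemidef)
    (K : ℝ) (hK0 : 0 ≤ K)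
    (hKb : ∀ v : Fin n → ℝ, v ⬝ᵥ v = 1 → v ⬝ᵥ (L 1) *ᵥ v ≤ K)
    (ε : ℝ) (hε : 0 < ε) :
    ∀ t ∈ Icc (0 : ℝ) T, ∀ v : Fin n → ℝ, v ⬝ᵥ v = 1 →
      0 < v ⬝ᵥ (Y t) *ᵥ v + ε * Real.exp ((K + 1) * t) := by
  set Z : ℝ → Matrix (Fin n) (Fin n) ℝ :=
    fun s => Y s + (ε * Real.exp ((K + 1) * s)) • (1 : Matrix (Fin n) (Fin n) ℝ) with hZ
  have hZquad : ∀ (s : ℝ) (w : Fin n → ℝ), w ⬝ᵥ Z s *ᵥ w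
      = w ⬝ᵥ Y s *ᵥ w + (ε * Real.exp ((K + 1) * s)) * (w ⬝ᵥ w) := by
    intro s w
    simp only [hZ]
    rw [Matrix.add_mulVec, dotProduct_add, Matrix.smul_mulVec, dotProduct_smul,
      smul_eq_mul, Matrix.one_mulVec]
  suffices hsuff : ∀ t ∈ Icc (0 : ℝ) T, ∀ v : Fin n → ℝ, v ⬝ᵥ v = 1 → 0 < v ⬝ᵥ Z t *ᵥ v by
    intro t ht v hv
    have := hsuff t ht v hv
    rwa [hZquad, hv, mul_one] at this
  by_contra hcon
  push_neg at hcon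
  obtain ⟨t₁, ht₁, v₁, hv₁, hv₁le⟩ := hcon
  set sph : Set (Fin n → ℝ) := {v | v ⬝ᵥ v = 1} with hsph
  set S : Set ℝ := {t ∈ Icc (0:ℝ) T | ∃ v ∈ sph, v ⬝ᵥ Z t *ᵥ v ≤ 0} with hSdef
  -- continuity facts
  have hYcont : ∀ i j, ContinuousOn (fun s => Y s i j) (Icc (0:ℝ) T) :=
    fun i j t ht => (hYderiv t ht i j).continuousWithinAt
  have hZcont : ∀ i j, ContinuousOn (fun s => Z s i j) (Icc (0:ℝ) T) := by
    intro i j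
    have hc : ContinuousOn
        (fun s => ε * Real.exp ((K+1)*s) * (1 : Matrix (Fin n) (Fin n) ℝ) i j)
        (Icc (0:ℝ) T) :=
      (Continuous.continuousOn (by fun_prop))
    refine ((hYcont i j).add hc).congr fun s hs => ?_
    simp only [hZ]
    simp [Matrix.add_apply, Matrix.smul_apply, smul_eq_mul]
  have hgcont : ContinuousOn (fun p : ℝ × (Fin n → ℝ) => p.2 ⬝ᵥ Z p.1 *ᵥ p.2)
      (Icc (0:ℝ) T ×ˢ (univ : Set (Fin n → ℝ))) := by
    have hsum : ContinuousOn (fun p : ℝ × (Fin n → ℝ) => ∑ i, ∑ j, p.2 i * Z p.1 i j * p.2 j)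
        (Icc (0:ℝ) T ×ˢ (univ : Set (Fin n → ℝ))) := by
      apply continuousOn_finset_sum
      intro i _
      apply continuousOn_finset_sum
      intro j _
      have h1 : ContinuousOn (fun p : ℝ × (Fin n → ℝ) => Z p.1 i j)
          (Icc (0:ℝ) T ×ˢ (univ : Set (Fin n → ℝ))) :=
        (hZcont i j).comp continuousOn_fst (fun p hp => hp.1)
      have h2 : Continuous (fun p : ℝ × (Fin n → ℝ) => p.2 i) :=
        (continuous_apply i).comp continuous_snd
      have h3 : Continuous (fun p : ℝ × (Fin n → ℝ) => p.2 j) :=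
        (continuous_apply j).comp continuous_snd
      exact (h2.continuousOn.mul h1).mul h3.continuousOn
    exact hsum.congr fun p hp => expand_quad _ _
  -- the sphere is compact
  have hdcont : Continuous fun v : Fin n → ℝ => v ⬝ᵥ v := by
    show Continuous fun v : Fin n → ℝ => ∑ i, v i * v i
    exact continuous_finset_sum _ fun i _ => (continuous_apply i).mul (continuous_apply i)
  have hsphcl : IsClosed sph := isClosed_eq hdcont continuous_const
  have hsphcpt : IsCompact sph := by
    refine IsCompact.of_isClosed_subset
      (isCompact_univ_pi (ι := Fin n) (s := fun _ => Icc (-1:ℝ) 1) fun _ => isCompact_Icc)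
      hsphcl ?_
    intro w hw
    have hw' : w ⬝ᵥ w = 1 := hw
    intro i _
    have h1 : |w i| ≤ 1 := by
      rw [abs_le_one_iff_mul_self_le_one]
      calc w i * w i ≤ ∑ j, w j * w j :=
            Finset.single_le_sum (f := fun j => w j * w j)
              (fun j _ => mul_self_nonneg _) (Finset.mem_univ i)
      _ = 1 := hw'
    exact abs_le.1 h1
  -- S is compact
  set S' : Set (ℝ × (Fin n → ℝ)) := (Icc (0:ℝ) T ×ˢ sph) ∩
    (fun p : ℝ × (Fin n → ℝ) => p.2 ⬝ᵥ Z p.1 *ᵥ p.2) ⁻¹' (Iic 0) with hS'def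
  have hS'cl : IsClosed S' :=
    ContinuousOn.preimage_isClosed_of_isClosed
      (hgcont.mono (prod_mono_right (subset_univ _))) (isClosed_Icc.prod hsphcl) isClosed_Iic
  have hS'cpt : IsCompact S' :=
    (isCompact_Icc.prod hsphcpt).of_isClosed_subset hS'cl inter_subset_left
  have hSeq : S = Prod.fst '' S' := by
    ext t
    constructor
    · rintro ⟨ht, v, hv, hle⟩
      exact ⟨(t, v), ⟨⟨ht, hv⟩, hle⟩, rfl⟩
    · rintro ⟨⟨t', v⟩, ⟨⟨ht, hv⟩, hle⟩, rfl⟩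
      exact ⟨ht, v, hv, hle⟩
  have hScpt : IsCompact S := hSeq ▸ hS'cpt.image continuous_fst
  have hSne : S.Nonempty := ⟨t₁, ht₁, v₁, hv₁, hv₁le⟩
  set t₀ := sInf S with ht₀def
  have ht₀S : t₀ ∈ S := hScpt.isClosed.csInf_mem hSne hScpt.bddBelow
  obtain ⟨ht₀Icc, v, hv, hvle⟩ := ht₀S
  have ht₀S : t₀ ∈ S := ⟨ht₀Icc, v, hv, hvle⟩
  -- 0 is not in S
  have h0S : (0:ℝ) ∉ S := by
    rintro ⟨-, w, hw, hwle⟩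
    have hw' : w ⬝ᵥ w = 1 := hw
    have h1 : (0:ℝ) ≤ w ⬝ᵥ Y 0 *ᵥ w := by
      have := h0.dotProduct_mulVec_nonneg w; rwa [star_trivial] at this
    have h2 := hZquad 0 w
    rw [hw', mul_zero, Real.exp_zero, mul_one, mul_one] at h2
    rw [h2] at hwle
    linarith
  have ht₀pos : 0 < t₀ := by
    rcases eq_or_lt_of_le ht₀Icc.1 with h | h
    · exact absurd (h ▸ ht₀S) h0S
    · exact h
  -- before t₀ everything is positive
  have hlt : ∀ s, 0 ≤ s → s < t₀ → ∀ w ∈ sph, 0 < w ⬝ᵥ Z s *ᵥ w := by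
    intro s hs0 hst w hw
    have hsIcc : s ∈ Icc (0:ℝ) T := ⟨hs0, hst.le.trans ht₀Icc.2⟩
    have hns : s ∉ S := notMem_of_lt_csInf hst hScpt.bddBelow
    by_contra hle
    exact hns ⟨hsIcc, w, hw, le_of_not_gt hle⟩
  have hIoosub : Ioo (0:ℝ) t₀ ⊆ Icc (0:ℝ) T :=
    fun s hs => ⟨hs.1.le, hs.2.le.trans ht₀Icc.2⟩
  haveI hNB : (𝓝[Ioo (0:ℝ) t₀] t₀).NeBot := by
    apply mem_closure_iff_nhdsWithin_neBot.1
    rw [closure_Ioo (ne_of_lt ht₀pos)]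
    exact right_mem_Icc.2 ht₀pos.le
  have hquadcont : ∀ w : Fin n → ℝ,
      ContinuousWithinAt (fun s => w ⬝ᵥ Z s *ᵥ w) (Icc (0:ℝ) T) t₀ := by
    intro w
    have hco : ContinuousOn (fun s : ℝ => w ⬝ᵥ Z s *ᵥ w) (Icc (0:ℝ) T) := by
      have := hgcont.comp ((continuous_id.prodMk continuous_const).continuousOn :
        ContinuousOn (fun s : ℝ => (s, w)) (Icc (0:ℝ) T)) (fun s hs => ⟨hs, mem_univ _⟩)
      exact this
    exact hco t₀ ht₀Icc
  -- Z t₀ is PSD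
  have hquad_t₀ : ∀ w ∈ sph, 0 ≤ w ⬝ᵥ Z t₀ *ᵥ w := by
    intro w hw
    have hev : ∀ᶠ s in 𝓝[Ioo (0:ℝ) t₀] t₀, 0 ≤ w ⬝ᵥ Z s *ᵥ w :=
      eventually_nhdsWithin_of_forall fun s hs => (hlt s hs.1.le hs.2 w hw).le
    exact ge_of_tendsto ((hquadcont w).mono hIoosub) hev
  have hZsymm : (Z t₀).IsSymm := by
    simp only [hZ]
    unfold Matrix.IsSymm
    rw [Matrix.transpose_add, Matrix.transpose_smul, Matrix.transpose_one, hYsymm t₀ ht₀Icc]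
  have hZpsd : (Z t₀).PosSemidef := by
    refine PosSemidef.of_dotProduct_mulVec_nonneg (isHermitian_of_isSymm' hZsymm) fun x => ?_
    rw [star_trivial]
    by_cases hx : x = 0
    · simp [hx]
    · obtain ⟨u, hu, hux⟩ := unit_vec x hx
      rw [hux]
      have h1 := hquad_t₀ u hu
      have h2 : 0 ≤ x ⬝ᵥ x := by
        rw [dotProduct]; exact Finset.sum_nonneg fun i _ => mul_self_nonneg _
      exact mul_nonneg h2 h1
  have hv' : v ⬝ᵥ v = 1 := hv
  have hft₀ : v ⬝ᵥ Z t₀ *ᵥ v = 0 := le_antisymm hvle (hquad_t₀ v hv)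
  have hker : Z t₀ *ᵥ v = 0 :=
    (hZpsd.dotProduct_mulVec_zero_iff v).1 (by rw [star_trivial]; exact hft₀)
  have hQMv : 0 ≤ v ⬝ᵥ (L (Z t₀)) *ᵥ v := hQM _ hZpsd v hker
  -- the derivative of the quadratic form at t₀
  set θ : ℝ := Real.exp ((K + 1) * t₀) with hθ
  have hθpos : 0 < θ := Real.exp_pos _
  set D : Matrix (Fin n) (Fin n) ℝ := Y' t₀ + (ε * ((K+1) * θ)) • 1 with hD
  have hdij : ∀ i j, HasDerivWithinAt (fun s => Z s i j) (D i j) (Icc (0:ℝ) T) t₀ := by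
    intro i j
    have hexp : HasDerivAt (fun s => Real.exp ((K+1)*s)) ((K+1) * θ) t₀ := by
      have h1 : HasDerivAt (fun s : ℝ => (K+1)*s) (K+1) t₀ := by
        simpa using (hasDerivAt_id t₀).const_mul (K+1)
      have h2 := h1.exp
      simpa [hθ, mul_comm] using h2
    have hconst : HasDerivWithinAt
        (fun s => ε * Real.exp ((K+1)*s) * (1 : Matrix (Fin n) (Fin n) ℝ) i j)
        (ε * ((K+1)*θ) * (1 : Matrix (Fin n) (Fin n) ℝ) i j) (Icc (0:ℝ) T) t₀ :=
      ((hexp.const_mul ε).mul_const _).hasDerivWithinAt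
    have heq : ∀ s, Z s i j
        = Y s i j + ε * Real.exp ((K+1)*s) * (1 : Matrix (Fin n) (Fin n) ℝ) i j := by
      intro s
      simp only [hZ]
      simp [Matrix.add_apply, Matrix.smul_apply, smul_eq_mul]
    have hD' : D i j = Y' t₀ i j + ε * ((K+1)*θ) * (1 : Matrix (Fin n) (Fin n) ℝ) i j := by
      simp only [hD]
      simp [Matrix.add_apply, Matrix.smul_apply, smul_eq_mul]
    rw [hD']
    exact ((hYderiv t₀ ht₀Icc i j).add hconst).congr (fun s _ => heq s) (heq t₀)
  have hfderiv : HasDerivWithinAt (fun s => v ⬝ᵥ Z s *ᵥ v) (v ⬝ᵥ D *ᵥ v) (Icc (0:ℝ) T) t₀ := by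
    have hsum : HasDerivWithinAt (fun s => ∑ i, ∑ j, v i * Z s i j * v j)
        (∑ i, ∑ j, v i * D i j * v j) (Icc (0:ℝ) T) t₀ :=
      HasDerivWithinAt.fun_sum fun i _ => HasDerivWithinAt.fun_sum fun j _ =>
        ((hdij i j).const_mul (v i)).mul_const (v j)
    rw [expand_quad D v]
    exact hsum.congr (fun s _ => expand_quad (Z s) v) (expand_quad (Z t₀) v)
  -- the derivative is positive
  have hLZeq : L (Z t₀) = L (Y t₀) + (ε * θ) • L 1 := by
    simp only [hZ, hθ]
    rw [map_add]
    rw [_root_.map_smul]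
  have hq1 : v ⬝ᵥ (L (Y t₀)) *ᵥ v
      = v ⬝ᵥ (L (Z t₀)) *ᵥ v - (ε * θ) * (v ⬝ᵥ (L 1) *ᵥ v) := by
    rw [hLZeq, Matrix.add_mulVec, dotProduct_add, Matrix.smul_mulVec, dotProduct_smul,
      smul_eq_mul]
    ring
  have hq2 : (ε * θ) * (v ⬝ᵥ (L 1) *ᵥ v) ≤ (ε * θ) * K :=
    mul_le_mul_of_nonneg_left (hKb v hv') (by positivity)
  have hq3 : v ⬝ᵥ (L (Y t₀)) *ᵥ v ≤ v ⬝ᵥ (Y' t₀) *ᵥ v := by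
    have := (hineq t₀ ht₀Icc).dotProduct_mulVec_nonneg v
    rw [star_trivial, Matrix.sub_mulVec, dotProduct_sub] at this
    linarith
  have hfpos : 0 < v ⬝ᵥ D *ᵥ v := by
    have hDq : v ⬝ᵥ D *ᵥ v = v ⬝ᵥ (Y' t₀) *ᵥ v + ε * ((K+1)*θ) := by
      rw [hD, Matrix.add_mulVec, dotProduct_add, Matrix.smul_mulVec, dotProduct_smul,
        smul_eq_mul, Matrix.one_mulVec, hv', mul_one]
    have hexpand : ε * ((K+1)*θ) = (ε*θ)*K + ε*θ := by ring
    rw [hDq, hexpand]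
    have hεθ : 0 < ε * θ := by positivity
    linarith
  -- but the derivative must be nonpositive: contradiction
  have hslope : Filter.Tendsto (slope (fun s => v ⬝ᵥ Z s *ᵥ v) t₀) (𝓝[Ioo (0:ℝ) t₀] t₀)
      (𝓝 (v ⬝ᵥ D *ᵥ v)) := by
    have h1 := hasDerivWithinAt_iff_tendsto_slope.1 hfderiv
    exact h1.mono_left (nhdsWithin_mono _ (fun s hs => ⟨hIoosub hs, ne_of_lt hs.2⟩))
  have hle0 : v ⬝ᵥ D *ᵥ v ≤ 0 := by
    refine le_of_tendsto hslope (eventually_nhdsWithin_of_forall fun s hs => ?_)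
    have hfs : 0 ≤ v ⬝ᵥ Z s *ᵥ v := (hlt s hs.1.le hs.2 v hv).le
    have hsl : slope (fun s => v ⬝ᵥ Z s *ᵥ v) t₀ s = (v ⬝ᵥ Z s *ᵥ v) / (s - t₀) := by
      rw [slope_def_field, hft₀, sub_zero]
    rw [hsl]
    exact div_nonpos_of_nonneg_of_nonpos hfs (by linarith [hs.2])
  linarith

end Aux

/-- If `Y(0)` is positive semidefinite and `Y'(t) - L(Y(t))` is positive semidefinite on
`[0, T]` for a resolvent positive operator `L`, then `Y(t)` is positive semidefinite on
`[0, T]`. -/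
theorem psd_propagation_of_resolvent_positive {n : ℕ}
    (L : Matrix (Fin n) (Fin n) ℝ →ₗ[ℝ] Matrix (Fin n) (Fin n) ℝ)
    (hLsymm : ∀ M : Matrix (Fin n) (Fin n) ℝ, M.IsSymm → (L M).IsSymm)
    (hLres : ResolventPositive (fun M => L M))
    (T : ℝ) (hT : 0 < T)
    (Y Y' : ℝ → Matrix (Fin n) (Fin n) ℝ)
    (hYsymm : ∀ t ∈ Icc (0 : ℝ) T, (Y t).IsSymm)
    (hYderiv : ∀ t ∈ Icc (0 : ℝ) T, ∀ i j,
      HasDerivWithinAt (fun s => Y s i j) (Y' t i j) (Icc (0 : ℝ) T) t)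
    (h0 : (Y 0).PosSemidef)
    (hineq : ∀ t ∈ Icc (0 : ℝ) T, (Y' t - L (Y t)).PosSemidef) :
    ∀ t ∈ Icc (0 : ℝ) T, (Y t).PosSemidef := by
  set K : ℝ := ∑ i, ∑ j, |(L 1 : Matrix (Fin n) (Fin n) ℝ) i j| with hK
  have hK0 : 0 ≤ K :=
    Finset.sum_nonneg fun i _ => Finset.sum_nonneg fun j _ => abs_nonneg _
  have hKb : ∀ v : Fin n → ℝ, v ⬝ᵥ v = 1 → v ⬝ᵥ (L 1) *ᵥ v ≤ K :=
    fun v hv => quad_bound_unit _ v hv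
  have hQM : ∀ X : Matrix (Fin n) (Fin n) ℝ, X.PosSemidef → ∀ v : Fin n → ℝ,
      X *ᵥ v = 0 → 0 ≤ v ⬝ᵥ (L X) *ᵥ v :=
    fun X hX v hv => quasimonotone L hLres X hX v hv
  have key := fun (ε : ℝ) (hε : 0 < ε) =>
    key_claim L hQM T hT Y Y' hYsymm hYderiv h0 hineq K hK0 hKb ε hε
  intro t ht
  refine PosSemidef.of_dotProduct_mulVec_nonneg (isHermitian_of_isSymm' (hYsymm t ht)) fun x => ?_
  rw [star_trivial]
  by_cases hx : x = 0
  · simp [hx]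
  obtain ⟨u, hu, hux⟩ := unit_vec x hx
  rw [hux]
  have h2 : 0 ≤ x ⬝ᵥ x := by
    rw [dotProduct]; exact Finset.sum_nonneg fun i _ => mul_self_nonneg _
  refine mul_nonneg h2 ?_
  by_contra hneg
  push_neg at hneg
  set q : ℝ := u ⬝ᵥ Y t *ᵥ u with hq
  set e : ℝ := Real.exp ((K + 1) * t) with he
  have hepos : 0 < e := Real.exp_pos _
  have hε : 0 < -q / (2 * e) := div_pos (by linarith) (by linarith)
  have hkey := key _ hε t ht u hu
  have hmul : -q / (2 * e) * e = -q / 2 := by field_simp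
  rw [hmul] at hkey
  linarith
end

section
/- Let L be a resolvent positive linear operator on the space of real symmetric n×n matrices, and let T > 0. Suppose Y : [0,T] → (symmetric n×n real matrices) is differentiable, Y(0) is positive definite, and for every t ∈ [0,T] the matrix Y'(t) − L(Y(t)) is positive definite. Then Y(t) is positive definite for every t ∈ [0,T]. -/
open Matrix Set

attribute [local instance] Matrix.normedAddCommGroup Matrix.normedSpace

lemma aux_quad_smul {n : ℕ} (M : Matrix (Fin n) (Fin n) ℝ) (x : Fin n → ℝ) (c : ℝ) :
    (c • x) ⬝ᵥ M *ᵥ (c • x) = c ^ 2 * (x ⬝ᵥ M *ᵥ x) := by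
  simp [Matrix.mulVec_smul, dotProduct_smul, smul_dotProduct, smul_eq_mul]
  ring

lemma aux_quad_bound {n : ℕ} (v : Fin n → ℝ) (W : Matrix (Fin n) (Fin n) ℝ) :
    |v ⬝ᵥ W *ᵥ v| ≤ (∑ i, |v i|) ^ 2 * ‖W‖ := by
  have h1 : |v ⬝ᵥ W *ᵥ v| ≤ ∑ i, ∑ j, |v i| * (‖W‖ * |v j|) := by
    calc |v ⬝ᵥ W *ᵥ v| = |∑ i, v i * ∑ j, W i j * v j| := by
          simp [dotProduct, Matrix.mulVec]
      _ ≤ ∑ i, |v i * ∑ j, W i j * v j| := Finset.abs_sum_le_sum_abs _ _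
      _ ≤ ∑ i, ∑ j, |v i| * (‖W‖ * |v j|) := by
          apply Finset.sum_le_sum
          intro i _
          rw [abs_mul]
          calc |v i| * |∑ j, W i j * v j| ≤ |v i| * ∑ j, ‖W‖ * |v j| := by
                apply mul_le_mul_of_nonneg_left _ (abs_nonneg _)
                calc |∑ j, W i j * v j| ≤ ∑ j, |W i j * v j| := Finset.abs_sum_le_sum_abs _ _
                  _ ≤ ∑ j, ‖W‖ * |v j| := by
                      apply Finset.sum_le_sum; intro j _
                      rw [abs_mul]
                      exact mul_le_mul_of_nonneg_right (W.norm_entry_le_entrywise_sup_norm) (abs_nonneg _)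
            _ = ∑ j, |v i| * (‖W‖ * |v j|) := by rw [Finset.mul_sum]
  calc |v ⬝ᵥ W *ᵥ v| ≤ ∑ i, ∑ j, |v i| * (‖W‖ * |v j|) := h1
    _ = (∑ i, |v i|) ^ 2 * ‖W‖ := by
        have : ∀ i : Fin n, ∑ j, |v i| * (‖W‖ * |v j|) = |v i| * ‖W‖ * ∑ j, |v j| := by
          intro i; rw [Finset.mul_sum]; ring_nf
        simp_rw [this, ← Finset.sum_mul]
        ring


/-- Cross-positivity: if `X` is PSD and symmetric and `v ⬝ X v = 0` then `v ⬝ (L X) v ≥ 0`. -/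
lemma aux_crosspos {n : ℕ} (L : Matrix (Fin n) (Fin n) ℝ →ₗ[ℝ] Matrix (Fin n) (Fin n) ℝ)
    (hLres : ResolventPositive (fun M => L M))
    {X : Matrix (Fin n) (Fin n) ℝ} (hX : X.PosSemidef)
    {v : Fin n → ℝ} (hv : v ⬝ᵥ X *ᵥ v = 0) :
    0 ≤ v ⬝ᵥ (L X) *ᵥ v := by
  obtain ⟨α₀, hα⟩ := hLres
  have hXsymm : X.IsSymm := by
    rw [Matrix.IsSymm, ← X.conjTranspose_eq_transpose_of_trivial]; exact hX.1
  -- operator norm bound for L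
  obtain ⟨C, hC0, hC⟩ : ∃ C : ℝ, 0 ≤ C ∧ ∀ W : Matrix (Fin n) (Fin n) ℝ, ‖L W‖ ≤ C * ‖W‖ := by
    obtain ⟨C, hC, h⟩ := SemilinearMapClass.bound_of_continuous L (LinearMap.continuous_of_finiteDimensional L)
    exact ⟨C, hC.le, h⟩
  set K : ℝ := (∑ i, |v i|) ^ 2 with hK
  have hK0 : 0 ≤ K := sq_nonneg _
  have key : ∀ ε : ℝ, 0 < ε → -ε ≤ v ⬝ᵥ (L X) *ᵥ v := by
    intro ε hε
    set B : ℝ := K * C * (2 * C * ‖X‖) with hB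
    have hB0 : 0 ≤ B := by positivity
    set α : ℝ := max (max α₀ (2 * C + 1)) (B / ε) + 1 with hαdef
    have hα1 : α₀ < α :=
      lt_of_le_of_lt (le_trans (le_max_left _ _) (le_max_left _ _)) (lt_add_one _)
    have hα2 : 2 * C + 1 ≤ α :=
      le_trans (le_trans (le_max_right _ _) (le_max_left _ _)) (le_of_lt (lt_add_one _))
    have hα3 : B / ε < α := lt_of_le_of_lt (le_max_right _ _) (lt_add_one _)
    have hαpos : 0 < α := by linarith
    obtain ⟨h_bij, h_pos⟩ := hα α hα1
    obtain ⟨Xa, ⟨hXaS, hXaE⟩, -⟩ := h_bij (α • X) (hXsymm.smul α)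
    have hsmulPSD : (α • X).PosSemidef := by
      refine Matrix.PosSemidef.of_dotProduct_mulVec_nonneg ?_ (fun x => ?_)
      · exact (Matrix.conjTranspose_eq_transpose_of_trivial _).trans (hXsymm.smul α)
      · have := hX.dotProduct_mulVec_nonneg x
        rw [Matrix.smul_mulVec, dotProduct_smul, smul_eq_mul]
        positivity
    have hXaPSD : Xa.PosSemidef := h_pos Xa (α • X) hXaS hXaE hsmulPSD
    -- quadratic form identity
    have hquad : α * (v ⬝ᵥ Xa *ᵥ v) - v ⬝ᵥ (L Xa) *ᵥ v = 0 := by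
      have := congrArg (fun M => v ⬝ᵥ M *ᵥ v) hXaE
      simp only [Matrix.sub_mulVec, dotProduct_sub, Matrix.smul_mulVec,
        dotProduct_smul, smul_eq_mul] at this
      rw [this, hv, mul_zero]
    have hXaq : 0 ≤ v ⬝ᵥ Xa *ᵥ v := by simpa using hXaPSD.dotProduct_mulVec_nonneg v
    have hLXa : 0 ≤ v ⬝ᵥ (L Xa) *ᵥ v := by nlinarith
    -- norm estimates
    have hdiffeq : Xa - X = α⁻¹ • (L Xa) := by
      have h1 : α • (Xa - X) = L Xa := by
        rw [smul_sub]; rw [sub_eq_iff_eq_add] at hXaE; rw [hXaE]; abel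
      rw [← h1, smul_smul, inv_mul_cancel₀ (ne_of_gt hαpos), one_smul]
    have hnd : ‖Xa - X‖ ≤ α⁻¹ * (C * ‖Xa‖) := by
      rw [hdiffeq, norm_smul, Real.norm_eq_abs, abs_of_pos (inv_pos.mpr hαpos)]
      exact mul_le_mul_of_nonneg_left (hC Xa) (le_of_lt (inv_pos.mpr hαpos))
    have hCα : α⁻¹ * C ≤ 1 / 2 := by
      rw [inv_mul_eq_div, div_le_div_iff₀ hαpos (by norm_num)]; linarith
    have hXa2 : ‖Xa‖ ≤ 2 * ‖X‖ := by
      have h1 : ‖Xa‖ ≤ ‖X‖ + ‖Xa - X‖ := by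
        calc ‖Xa‖ = ‖X + (Xa - X)‖ := by rw [show X + (Xa - X) = Xa by abel]
          _ ≤ ‖X‖ + ‖Xa - X‖ := norm_add_le _ _
      nlinarith [norm_nonneg Xa, norm_nonneg (Xa - X), inv_pos.mpr hαpos]
    have hdiff : ‖Xa - X‖ ≤ α⁻¹ * (C * (2 * ‖X‖)) := by
      refine hnd.trans ?_
      apply mul_le_mul_of_nonneg_left _ (le_of_lt (inv_pos.mpr hαpos))
      exact mul_le_mul_of_nonneg_left hXa2 hC0
    -- perturbation estimate
    have hpert : |v ⬝ᵥ (L (Xa - X)) *ᵥ v| ≤ α⁻¹ * B := by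
      calc |v ⬝ᵥ (L (Xa - X)) *ᵥ v| ≤ K * ‖L (Xa - X)‖ := aux_quad_bound v _
        _ ≤ K * (C * ‖Xa - X‖) := mul_le_mul_of_nonneg_left (hC _) hK0
        _ ≤ K * (C * (α⁻¹ * (C * (2 * ‖X‖)))) := by
            apply mul_le_mul_of_nonneg_left _ hK0
            exact mul_le_mul_of_nonneg_left hdiff hC0
        _ = α⁻¹ * B := by rw [hB]; ring
    have hBlt : α⁻¹ * B < ε := by
      rw [div_lt_iff₀ hε] at hα3
      rw [inv_mul_eq_div, div_lt_iff₀ hαpos]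
      linarith [mul_comm ε α]
    have hsplit : v ⬝ᵥ (L X) *ᵥ v = v ⬝ᵥ (L Xa) *ᵥ v - v ⬝ᵥ (L (Xa - X)) *ᵥ v := by
      rw [map_sub, Matrix.sub_mulVec, dotProduct_sub]; ring
    have habs := abs_le.mp hpert
    rw [hsplit]
    linarith
  by_contra hneg
  push_neg at hneg
  have := key (-(v ⬝ᵥ (L X) *ᵥ v) / 2) (by linarith)
  linarith

open Filter Topology in
lemma aux_tendsto_quad {n : ℕ} (Y : ℝ → Matrix (Fin n) (Fin n) ℝ)
    (A : Matrix (Fin n) (Fin n) ℝ) (u : ℕ → ℝ) (w : ℕ → Fin n → ℝ) (v : Fin n → ℝ)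
    (hY : ∀ i j, Tendsto (fun k => Y (u k) i j) atTop (𝓝 (A i j)))
    (hw : Tendsto w atTop (𝓝 v)) :
    Tendsto (fun k => w k ⬝ᵥ Y (u k) *ᵥ w k) atTop (𝓝 (v ⬝ᵥ A *ᵥ v)) := by
  have hwc : ∀ i, Tendsto (fun k => w k i) atTop (𝓝 (v i)) :=
    fun i => ((continuous_apply i).tendsto v).comp hw
  simp only [dotProduct, Matrix.mulVec]
  exact tendsto_finset_sum _ fun i _ =>
    (hwc i).mul (tendsto_finset_sum _ fun j _ => (hY i j).mul (hwc j))

lemma aux_unit {n : ℕ} {M : Matrix (Fin n) (Fin n) ℝ} {x : Fin n → ℝ} (hx : x ≠ 0)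
    (h : x ⬝ᵥ M *ᵥ x ≤ 0) : ∃ u : Fin n → ℝ, ‖u‖ = 1 ∧ u ⬝ᵥ M *ᵥ u ≤ 0 := by
  refine ⟨‖x‖⁻¹ • x, ?_, ?_⟩
  · rw [norm_smul, norm_inv, norm_norm, inv_mul_cancel₀ (norm_ne_zero_iff.mpr hx)]
  · rw [aux_quad_smul]
    have := sq_nonneg ‖x‖⁻¹
    nlinarith

lemma aux_pos_of_units {n : ℕ} {M : Matrix (Fin n) (Fin n) ℝ}
    (h : ∀ u : Fin n → ℝ, ‖u‖ = 1 → 0 < u ⬝ᵥ M *ᵥ u) :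
    ∀ x : Fin n → ℝ, x ≠ 0 → 0 < x ⬝ᵥ M *ᵥ x := by
  intro x hx
  have hn : ‖x‖ ≠ 0 := norm_ne_zero_iff.mpr hx
  have h1 := h (‖x‖⁻¹ • x)
    (by rw [norm_smul, norm_inv, norm_norm, inv_mul_cancel₀ hn])
  rw [aux_quad_smul] at h1
  have h2 : 0 < (‖x‖⁻¹) ^ 2 := by positivity
  nlinarith


/-- If `Y(0)` is positive definite and `Y'(t) - L(Y(t))` is positive definite on `[0, T]`
for a resolvent positive operator `L`, then `Y(t)` is positive definite on `[0, T]`. -/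
theorem posdef_propagation_of_resolvent_positive {n : ℕ}
    (L : Matrix (Fin n) (Fin n) ℝ →ₗ[ℝ] Matrix (Fin n) (Fin n) ℝ)
    (hLsymm : ∀ M : Matrix (Fin n) (Fin n) ℝ, M.IsSymm → (L M).IsSymm)
    (hLres : ResolventPositive (fun M => L M))
    (T : ℝ) (hT : 0 < T)
    (Y Y' : ℝ → Matrix (Fin n) (Fin n) ℝ)
    (hYsymm : ∀ t ∈ Icc (0 : ℝ) T, (Y t).IsSymm)
    (hYderiv : ∀ t ∈ Icc (0 : ℝ) T, ∀ i j,
      HasDerivWithinAt (fun s => Y s i j) (Y' t i j) (Icc (0 : ℝ) T) t)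
    (h0 : (Y 0).PosDef)
    (hineq : ∀ t ∈ Icc (0 : ℝ) T, (Y' t - L (Y t)).PosDef) :
    ∀ t ∈ Icc (0 : ℝ) T, (Y t).PosDef := by
  classical
  by_contra hcon
  push_neg at hcon
  obtain ⟨t₀, ht₀, hbad⟩ := hcon
  have hHerm : ∀ t ∈ Icc (0 : ℝ) T, (Y t).IsHermitian := fun t ht =>
    (Matrix.conjTranspose_eq_transpose_of_trivial _).trans (hYsymm t ht)
  -- derivative of quadratic forms
  have hQderiv : ∀ t ∈ Icc (0 : ℝ) T, ∀ x : Fin n → ℝ,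
      HasDerivWithinAt (fun s => x ⬝ᵥ Y s *ᵥ x) (x ⬝ᵥ Y' t *ᵥ x) (Icc (0 : ℝ) T) t := by
    intro t ht x
    simp only [dotProduct, Matrix.mulVec]
    exact HasDerivWithinAt.fun_sum fun i _ =>
      (HasDerivWithinAt.fun_sum fun j _ => (hYderiv t ht i j).mul_const (x j)).const_mul (x i)
  have hcont : ∀ t ∈ Icc (0 : ℝ) T, ∀ x : Fin n → ℝ,
      ContinuousWithinAt (fun s => x ⬝ᵥ Y s *ᵥ x) (Icc (0 : ℝ) T) t :=
    fun t ht x => (hQderiv t ht x).continuousWithinAt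
  -- the bad set
  set S : Set ℝ := {t | t ∈ Icc (0 : ℝ) T ∧
      ∃ u : Fin n → ℝ, ‖u‖ = 1 ∧ u ⬝ᵥ Y t *ᵥ u ≤ 0} with hSdef
  have hS_ne : S.Nonempty := by
    have hx : ∃ x : Fin n → ℝ, x ≠ 0 ∧ x ⬝ᵥ Y t₀ *ᵥ x ≤ 0 := by
      by_contra hno
      push_neg at hno
      exact hbad (Matrix.PosDef.of_dotProduct_mulVec_pos (hHerm t₀ ht₀) fun x hx => by simpa using hno x hx)
    obtain ⟨x, hx0, hxq⟩ := hx
    exact ⟨t₀, ht₀, aux_unit hx0 hxq⟩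
  have hS_bdd : BddBelow S := ⟨0, fun t ht => ht.1.1⟩
  set t₁ := sInf S with ht₁def
  obtain ⟨s₀, hs₀⟩ := hS_ne
  have ht₁0 : 0 ≤ t₁ := le_csInf ⟨s₀, hs₀⟩ fun t ht => ht.1.1
  have ht₁T : t₁ ≤ T := (csInf_le hS_bdd hs₀).trans hs₀.1.2
  have ht₁Icc : t₁ ∈ Icc (0 : ℝ) T := ⟨ht₁0, ht₁T⟩
  -- strictly before t₁ the quadratic form is positive on unit vectors
  have hpre : ∀ s, 0 ≤ s → s < t₁ → ∀ u : Fin n → ℝ, ‖u‖ = 1 → 0 < u ⬝ᵥ Y s *ᵥ u := by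
    intro s hs0 hst u hu
    by_contra hle
    push_neg at hle
    have hmem : s ∈ S := ⟨⟨hs0, hst.le.trans ht₁T⟩, u, hu, hle⟩
    exact absurd (csInf_le hS_bdd hmem) (not_le.mpr hst)
  have hposQ : ∀ s, 0 ≤ s → s < t₁ → ∀ x : Fin n → ℝ, 0 ≤ x ⬝ᵥ Y s *ᵥ x := by
    intro s hs0 hst x
    rcases eq_or_ne x 0 with rfl | hx
    · simp
    · exact (aux_pos_of_units (hpre s hs0 hst) x hx).le
  -- a bad unit vector at t₁
  obtain ⟨u, -, hu_tend, hu_mem⟩ := exists_seq_tendsto_sInf ⟨s₀, hs₀⟩ hS_bdd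
  choose w hw1 hw2 using fun k => (hu_mem k).2
  have hw_sph : ∀ k, w k ∈ Metric.sphere (0 : Fin n → ℝ) 1 := fun k => by
    simpa [mem_sphere_zero_iff_norm] using hw1 k
  obtain ⟨v, hv_sph, φ, hφ, hvt⟩ :=
    (isCompact_sphere (0 : Fin n → ℝ) 1).tendsto_subseq hw_sph
  have hvnorm : ‖v‖ = 1 := mem_sphere_zero_iff_norm.mp hv_sph
  have hvne : v ≠ 0 := by
    intro h; rw [h, norm_zero] at hvnorm; norm_num at hvnorm
  have huφ : Filter.Tendsto (fun k => u (φ k)) Filter.atTop (nhdsWithin t₁ (Icc (0 : ℝ) T)) := by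
    rw [tendsto_nhdsWithin_iff]
    exact ⟨hu_tend.comp hφ.tendsto_atTop, Filter.Eventually.of_forall fun k => (hu_mem (φ k)).1⟩
  have hYten : ∀ i j, Filter.Tendsto (fun k => Y (u (φ k)) i j)
      Filter.atTop (nhds (Y t₁ i j)) := by
    intro i j
    have hc : ContinuousWithinAt (fun s => Y s i j) (Icc (0 : ℝ) T) t₁ :=
      (hYderiv t₁ ht₁Icc i j).continuousWithinAt
    exact hc.tendsto.comp huφ
  have hQt : Filter.Tendsto (fun k => (w ∘ φ) k ⬝ᵥ Y ((fun k => u (φ k)) k) *ᵥ (w ∘ φ) k)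
      Filter.atTop (nhds (v ⬝ᵥ Y t₁ *ᵥ v)) :=
    aux_tendsto_quad Y (Y t₁) (fun k => u (φ k)) (w ∘ φ) v hYten hvt
  have hQv_le : v ⬝ᵥ Y t₁ *ᵥ v ≤ 0 :=
    le_of_tendsto hQt (Filter.Eventually.of_forall fun k => hw2 (φ k))
  -- t₁ is positive
  have ht₁pos : 0 < t₁ := by
    rcases ht₁0.lt_or_eq with h | h
    · exact h
    · exfalso
      have := h0.dotProduct_mulVec_pos hvne
      rw [star_trivial] at this
      rw [← h] at hQv_le
      linarith
  -- Y t₁ is positive semidefinite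
  have hsub : Ico (0 : ℝ) t₁ ⊆ Icc (0 : ℝ) T := fun s hs => ⟨hs.1, hs.2.le.trans ht₁T⟩
  have hne : (nhdsWithin t₁ (Ico (0 : ℝ) t₁)).NeBot := by
    rw [← mem_closure_iff_nhdsWithin_neBot, closure_Ico (ne_of_lt ht₁pos)]
    exact ⟨ht₁0, le_refl t₁⟩
  have hPSD : (Y t₁).PosSemidef := by
    refine Matrix.PosSemidef.of_dotProduct_mulVec_nonneg (hHerm t₁ ht₁Icc) fun x => ?_
    rw [star_trivial]
    have ht : Filter.Tendsto (fun s => x ⬝ᵥ Y s *ᵥ x) (nhdsWithin t₁ (Ico (0 : ℝ) t₁))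
        (nhds (x ⬝ᵥ Y t₁ *ᵥ x)) := (hcont t₁ ht₁Icc x).mono hsub
    exact ge_of_tendsto ht (eventually_nhdsWithin_of_forall fun s hs => hposQ s hs.1 hs.2 x)
  have hQv0 : v ⬝ᵥ Y t₁ *ᵥ v = 0 := le_antisymm hQv_le (by simpa using hPSD.dotProduct_mulVec_nonneg v)
  -- cross positivity
  have hLv : 0 ≤ v ⬝ᵥ (L (Y t₁)) *ᵥ v := aux_crosspos L hLres hPSD hQv0
  -- derivative is positive
  have hf' : 0 < v ⬝ᵥ Y' t₁ *ᵥ v := by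
    have h1 := (hineq t₁ ht₁Icc).dotProduct_mulVec_pos hvne
    rw [star_trivial, Matrix.sub_mulVec, dotProduct_sub] at h1
    linarith
  -- but the left slopes are nonpositive
  have hfI : HasDerivWithinAt (fun s => v ⬝ᵥ Y s *ᵥ v) (v ⬝ᵥ Y' t₁ *ᵥ v)
      (Ico (0 : ℝ) t₁) t₁ := (hQderiv t₁ ht₁Icc v).mono hsub
  rw [hasDerivWithinAt_iff_tendsto_slope] at hfI
  have hdiffset : Ico (0 : ℝ) t₁ \ {t₁} = Ico (0 : ℝ) t₁ := by
    rw [diff_singleton_eq_self]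
    exact fun h => lt_irrefl t₁ h.2
  rw [hdiffset] at hfI
  have hle0 : v ⬝ᵥ Y' t₁ *ᵥ v ≤ 0 := by
    refine le_of_tendsto hfI (eventually_nhdsWithin_of_forall fun s hs => ?_)
    have hfs : 0 < v ⬝ᵥ Y s *ᵥ v := hpre s hs.1 hs.2 v hvnorm
    rw [slope_def_field, hQv0]
    apply le_of_lt
    apply div_neg_of_pos_of_neg
    · linarith
    · linarith [hs.2]
  linarith
end

section
/- For every real n×n matrix A, the linear operator L defined on real n×n matrices by L(X) := A X + X Aᵀ maps symmetric matrices to symmetric matrices and is resolvent positive. -/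
open Matrix

variable {n : ℕ}

lemma isSymm_iff_isHermitian' (X : Matrix (Fin n) (Fin n) ℝ) :
    X.IsSymm ↔ X.IsHermitian := by
  rw [Matrix.IsHermitian, Matrix.conjTranspose_eq_transpose_of_trivial]; rfl

/-- Key positivity lemma. -/
lemma key_pos (A : Matrix (Fin n) (Fin n) ℝ) {X : Matrix (Fin n) (Fin n) ℝ} {α : ℝ}
    (hα : 2 * (∑ i, ∑ j, |A i j|) < α) (hX : X.IsSymm)
    (hY : (α • X - (A * X + X * Aᵀ)).PosSemidef) : X.PosSemidef := by
  have hXh : X.IsHermitian := (isSymm_iff_isHermitian' X).1 hX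
  apply hXh.posSemidef_iff_eigenvalues_nonneg.mpr
  intro i
  set lam := hXh.eigenvalues i with hlam
  set v : Fin n → ℝ := ⇑(hXh.eigenvectorBasis i) with hv
  have hmul : X *ᵥ v = lam • v := hXh.mulVec_eigenvectorBasis i
  have hnorm : v ⬝ᵥ v = 1 := by
    have h1 : ‖hXh.eigenvectorBasis i‖ = 1 := hXh.eigenvectorBasis.orthonormal.1 i
    have h2 := EuclideanSpace.inner_eq_star_dotProduct (hXh.eigenvectorBasis i)
      (hXh.eigenvectorBasis i)
    rw [real_inner_self_eq_norm_sq, h1] at h2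
    simpa using h2.symm
  have hvX : v ᵥ* X = lam • v := by
    rw [← Matrix.mulVec_transpose, hX.eq, hmul]
  have hcalc : v ⬝ᵥ ((α • X - (A * X + X * Aᵀ)) *ᵥ v) = lam * (α - 2 * (v ⬝ᵥ (A *ᵥ v))) := by
    rw [Matrix.sub_mulVec, Matrix.add_mulVec, ← Matrix.mulVec_mulVec, ← Matrix.mulVec_mulVec,
      Matrix.smul_mulVec, dotProduct_sub, dotProduct_add,
      dotProduct_smul, hmul, dotProduct_smul, hnorm,
      Matrix.mulVec_smul, dotProduct_smul, Matrix.dotProduct_mulVec v X, hvX,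
      smul_dotProduct, Matrix.mulVec_transpose, dotProduct_comm v (v ᵥ* A),
      ← Matrix.dotProduct_mulVec]
    simp only [smul_eq_mul]
    ring
  have h0 : 0 ≤ v ⬝ᵥ ((α • X - (A * X + X * Aᵀ)) *ᵥ v) := by
    simpa using hY.dotProduct_mulVec_nonneg v
  rw [hcalc] at h0
  have hnorm' : ∑ k, v k * v k = 1 := by
    simpa [dotProduct] using hnorm
  have hvle : ∀ j, |v j| ≤ 1 := by
    intro j
    have h1 : v j * v j ≤ ∑ k, v k * v k :=
      Finset.single_le_sum (f := fun k => v k * v k)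
        (fun k _ => mul_self_nonneg (v k)) (Finset.mem_univ j)
    nlinarith [abs_nonneg (v j), sq_abs (v j), h1, hnorm']
  have hbound : |v ⬝ᵥ (A *ᵥ v)| ≤ ∑ i, ∑ j, |A i j| := by
    have h1 : v ⬝ᵥ (A *ᵥ v) = ∑ k, v k * ∑ j, A k j * v j := rfl
    rw [h1]
    refine (Finset.abs_sum_le_sum_abs _ _).trans (Finset.sum_le_sum fun k _ => ?_)
    calc |v k * ∑ j, A k j * v j| = |v k| * |∑ j, A k j * v j| := abs_mul _ _
      _ ≤ 1 * ∑ j, |A k j * v j| :=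
          mul_le_mul (hvle k) (Finset.abs_sum_le_sum_abs _ _) (abs_nonneg _) zero_le_one
      _ = ∑ j, |A k j * v j| := one_mul _
      _ ≤ ∑ j, |A k j| := Finset.sum_le_sum fun j _ => by
          rw [abs_mul]; exact mul_le_of_le_one_right (abs_nonneg _) (hvle j)
  have hc : 0 < α - 2 * (v ⬝ᵥ (A *ᵥ v)) := by
    have := (abs_le.mp hbound).2; linarith
  exact (mul_nonneg_iff_of_pos_right hc).mp h0

def symmSub (n : ℕ) : Submodule ℝ (Matrix (Fin n) (Fin n) ℝ) where
  carrier := {X | X.IsSymm}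
  add_mem' := fun ha hb => ha.add hb
  zero_mem' := Matrix.isSymm_zero
  smul_mem' := fun c _ h => by
    simp only [Set.mem_setOf_eq, Matrix.IsSymm, Matrix.transpose_smul] at *
    rw [h]

lemma lyap_symm (A : Matrix (Fin n) (Fin n) ℝ) {X : Matrix (Fin n) (Fin n) ℝ}
    (hX : X.IsSymm) : (A * X + X * Aᵀ).IsSymm := by
  simp only [Matrix.IsSymm, Matrix.transpose_add, Matrix.transpose_mul,
    Matrix.transpose_transpose] at *
  rw [hX, add_comm]

noncomputable def lyapT (A : Matrix (Fin n) (Fin n) ℝ) (α : ℝ) :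
    symmSub n →ₗ[ℝ] symmSub n where
  toFun X := ⟨α • X.1 - (A * X.1 + X.1 * Aᵀ), ((X.2.smul α).sub (lyap_symm A X.2) : _)⟩
  map_add' X Y := by
    ext i j
    simp [mul_add, add_mul, smul_add]
    ring
  map_smul' c X := by
    ext i j
    simp [Matrix.mul_smul, Matrix.smul_mul, smul_smul, mul_comm]
    ring

lemma lyapT_injective (A : Matrix (Fin n) (Fin n) ℝ) {α : ℝ}
    (hα : 2 * (∑ i, ∑ j, |A i j|) < α) : Function.Injective (lyapT A α) := by
  rw [← LinearMap.ker_eq_bot, Submodule.eq_bot_iff]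
  rintro ⟨X, hXs⟩ hX0
  have h0 : α • X - (A * X + X * Aᵀ) = 0 := congrArg Subtype.val hX0
  have hP : X.PosSemidef := key_pos A hα hXs (h0 ▸ Matrix.PosSemidef.zero)
  have hN : (-X).PosSemidef := by
    refine key_pos A hα (hXs.neg) ?_
    have : α • (-X) - (A * (-X) + (-X) * Aᵀ) = -(α • X - (A * X + X * Aᵀ)) := by
      simp [Matrix.mul_neg, Matrix.neg_mul]; abel
    rw [this, h0, neg_zero]
    exact Matrix.PosSemidef.zero
  have hXzero : X = 0 := by
    have hmv : ∀ w : Fin n → ℝ, X *ᵥ w = 0 := by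
      intro w
      have h1 := hP.dotProduct_mulVec_nonneg w
      have h2 := hN.dotProduct_mulVec_nonneg w
      simp only [star_trivial, Matrix.neg_mulVec, dotProduct_neg] at h2
      have : w ⬝ᵥ X *ᵥ w = 0 := le_antisymm (by linarith) (by simpa using h1)
      exact (hP.dotProduct_mulVec_zero_iff w).mp (by simpa using this)
    ext i j
    have := congrFun (hmv (Pi.single j 1)) i
    simpa using this
  exact Subtype.ext hXzero

/-- For any real `n × n` matrix `A`, the Lyapunov operator `X ↦ A X + X Aᵀ` maps symmetric
matrices to symmetric matrices and is resolvent positive. -/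
theorem lyapunov_operator_resolventPositive {n : ℕ} (A : Matrix (Fin n) (Fin n) ℝ) :
    (∀ X : Matrix (Fin n) (Fin n) ℝ, X.IsSymm → (A * X + X * Aᵀ).IsSymm) ∧
    ResolventPositive (fun X : Matrix (Fin n) (Fin n) ℝ => A * X + X * Aᵀ) := by
  refine ⟨fun X hX => lyap_symm A hX, ⟨2 * (∑ i, ∑ j, |A i j|), fun α hα => ⟨?_, ?_⟩⟩⟩
  · intro Y hY
    have hinj := lyapT_injective A hα
    have hsurj : Function.Surjective (lyapT A α) :=
      (LinearMap.injective_iff_surjective).mp hinj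
    obtain ⟨Xs, hXs⟩ := hsurj ⟨Y, hY⟩
    refine ⟨Xs.1, ⟨Xs.2, congrArg Subtype.val hXs⟩, ?_⟩
    rintro X' ⟨hX's, hX'eq⟩
    have : lyapT A α ⟨X', hX's⟩ = ⟨Y, hY⟩ := Subtype.ext hX'eq
    exact congrArg Subtype.val (hinj (this.trans hXs.symm))
  · intro X Y hX heq hY
    exact key_pos A hα hX (heq ▸ hY)
end

section
/- Let L and Π be linear operators on real n×n matrices, each mapping symmetric matrices to symmetric matrices. If L is resolvent positive and Π is positive (i.e., Π maps every symmetric positive semidefinite matrix to a symmetric positive semidefinite matrix), then the operator L + Π is resolvent positive. In particular, for any real n×n matrices A, N₁, …, N_q, any symmetric positive semidefinite q×q matrix K = (k_{ij}), and any c ≥ 0, the generalized Lyapunov operator X ↦ A X + X Aᵀ + c Σ_{i,j=1}^{q} k_{ij} N_i X N_jᵀ is resolvent positive. -/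
open Matrix

open scoped BigOperators

namespace RPAux

variable {n : ℕ}

/-- entrywise L1 norm -/
def nrm (M : Matrix (Fin n) (Fin n) ℝ) : ℝ := ∑ i, ∑ j, |M i j|

lemma nrm_nonneg (M : Matrix (Fin n) (Fin n) ℝ) : 0 ≤ nrm M :=
  Finset.sum_nonneg fun _ _ => Finset.sum_nonneg fun _ _ => abs_nonneg _

lemma entry_abs_le_nrm (M : Matrix (Fin n) (Fin n) ℝ) (i j : Fin n) : |M i j| ≤ nrm M := by
  have h1 : |M i j| ≤ ∑ j', |M i j'| :=
    Finset.single_le_sum (fun k _ => abs_nonneg (M i k)) (Finset.mem_univ j)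
  refine h1.trans ?_
  exact Finset.single_le_sum (f := fun i => ∑ j', |M i j'|)
    (fun k _ => Finset.sum_nonneg fun l _ => abs_nonneg _) (Finset.mem_univ i)

lemma eq_zero_of_nrm_le (M : Matrix (Fin n) (Fin n) ℝ) (h : nrm M ≤ 0) : M = 0 := by
  ext i j
  have := entry_abs_le_nrm M i j
  have : |M i j| ≤ 0 := this.trans h
  simpa using le_antisymm this (abs_nonneg _)

lemma nrm_smul (c : ℝ) (M : Matrix (Fin n) (Fin n) ℝ) : nrm (c • M) = |c| * nrm M := by
  simp [nrm, abs_mul, Finset.mul_sum]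

lemma nrm_add_le (M N : Matrix (Fin n) (Fin n) ℝ) : nrm (M + N) ≤ nrm M + nrm N := by
  simp only [nrm, ← Finset.sum_add_distrib]
  refine Finset.sum_le_sum fun i _ => Finset.sum_le_sum fun j _ => ?_
  exact abs_add_le _ _

lemma nrm_mul_le (M N : Matrix (Fin n) (Fin n) ℝ) : nrm (M * N) ≤ nrm M * nrm N := by
  have h1 : nrm (M * N) ≤ ∑ k, (∑ i, |M i k|) * (∑ j, |N k j|) := by
    simp only [nrm, Matrix.mul_apply]
    calc ∑ i, ∑ j, |∑ k, M i k * N k j|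
        ≤ ∑ i, ∑ j, ∑ k, |M i k| * |N k j| := by
          refine Finset.sum_le_sum fun i _ => Finset.sum_le_sum fun j _ => ?_
          refine (Finset.abs_sum_le_sum_abs _ _).trans ?_
          refine le_of_eq (Finset.sum_congr rfl fun k _ => abs_mul _ _)
      _ = ∑ i, ∑ k, ∑ j, |M i k| * |N k j| :=
          Finset.sum_congr rfl fun i _ => Finset.sum_comm
      _ = ∑ k, ∑ i, ∑ j, |M i k| * |N k j| := Finset.sum_comm
      _ = ∑ k, (∑ i, |M i k|) * (∑ j, |N k j|) := by
          simp_rw [Finset.sum_mul, Finset.mul_sum]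
  refine h1.trans ?_
  have h2 : ∀ k : Fin n, (∑ i, |M i k|) ≤ nrm M := by
    intro k
    rw [nrm, Finset.sum_comm]
    exact Finset.single_le_sum (f := fun j => ∑ i, |M i j|)
      (fun l _ => Finset.sum_nonneg fun i _ => abs_nonneg _) (Finset.mem_univ k)
  calc ∑ k, (∑ i, |M i k|) * (∑ j, |N k j|)
      ≤ ∑ k, nrm M * (∑ j, |N k j|) := by
        refine Finset.sum_le_sum fun k _ => ?_
        exact mul_le_mul_of_nonneg_right (h2 k) (Finset.sum_nonneg fun j _ => abs_nonneg _)
    _ = nrm M * nrm N := by rw [← Finset.mul_sum]; rfl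

lemma nrm_transpose (M : Matrix (Fin n) (Fin n) ℝ) : nrm Mᵀ = nrm M := by
  rw [nrm, Finset.sum_comm]; rfl

lemma nrm_one : nrm (1 : Matrix (Fin n) (Fin n) ℝ) = n := by
  simp [nrm, Matrix.one_apply, apply_ite]

lemma nrm_sum_le {α : Type*} (s : Finset α) (f : α → Matrix (Fin n) (Fin n) ℝ) :
    nrm (∑ x ∈ s, f x) ≤ ∑ x ∈ s, nrm (f x) := by
  classical
  induction s using Finset.induction_on with
  | empty => simp [nrm]
  | insert _ _ h ih =>
    rw [Finset.sum_insert h, Finset.sum_insert h]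
    exact (nrm_add_le _ _).trans (by linarith)

lemma colsum_le_nrm (M : Matrix (Fin n) (Fin n) ℝ) (j : Fin n) : (∑ i, |M i j|) ≤ nrm M := by
  rw [nrm, Finset.sum_comm]
  exact Finset.single_le_sum (f := fun j' => ∑ i, |M i j'|)
    (fun l _ => Finset.sum_nonneg fun i _ => abs_nonneg _) (Finset.mem_univ j)

lemma quad_eq (M : Matrix (Fin n) (Fin n) ℝ) (v : Fin n → ℝ) :
    v ⬝ᵥ M *ᵥ v = ∑ i, ∑ j, v i * (M i j * v j) := by
  simp [dotProduct, Matrix.mulVec, Finset.mul_sum]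

lemma quad_abs_le (M : Matrix (Fin n) (Fin n) ℝ) (v : Fin n → ℝ) :
    |v ⬝ᵥ M *ᵥ v| ≤ nrm M * (∑ i, v i * v i) := by
  rw [quad_eq]
  have hc : ∀ i j : Fin n, |v i| * |v j| ≤ ∑ k, v k * v k := by
    intro i j
    have h1 : v i * v i ≤ ∑ k, v k * v k :=
      Finset.single_le_sum (fun k _ => mul_self_nonneg (v k)) (Finset.mem_univ i)
    have h2 : v j * v j ≤ ∑ k, v k * v k :=
      Finset.single_le_sum (fun k _ => mul_self_nonneg (v k)) (Finset.mem_univ j)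
    nlinarith [sq_nonneg (|v i| - |v j|), abs_nonneg (v i), abs_nonneg (v j),
      abs_mul_abs_self (v i), abs_mul_abs_self (v j)]
  calc |∑ i, ∑ j, v i * (M i j * v j)|
      ≤ ∑ i, ∑ j, |M i j| * (∑ k, v k * v k) := by
        refine (Finset.abs_sum_le_sum_abs _ _).trans ?_
        refine Finset.sum_le_sum fun i _ => ?_
        refine (Finset.abs_sum_le_sum_abs _ _).trans ?_
        refine Finset.sum_le_sum fun j _ => ?_
        have : |v i * (M i j * v j)| = |M i j| * (|v i| * |v j|) := by
          rw [abs_mul, abs_mul]; ring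
        rw [this]
        exact mul_le_mul_of_nonneg_left (hc i j) (abs_nonneg _)
    _ = nrm M * (∑ k, v k * v k) := by
        rw [nrm, Finset.sum_mul]
        refine Finset.sum_congr rfl fun i _ => ?_
        rw [Finset.sum_mul]

lemma isHermitian_iff_isSymm' (M : Matrix (Fin n) (Fin n) ℝ) : M.IsHermitian ↔ M.IsSymm := by
  rw [Matrix.IsHermitian, Matrix.conjTranspose_eq_transpose_of_trivial, Matrix.IsSymm]

lemma posSemidef_real (M : Matrix (Fin n) (Fin n) ℝ) :
    M.PosSemidef ↔ M.IsSymm ∧ ∀ v : Fin n → ℝ, 0 ≤ v ⬝ᵥ M *ᵥ v := by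
  rw [Matrix.posSemidef_iff_dotProduct_mulVec, isHermitian_iff_isSymm']
  simp [star_trivial]

lemma psd_add {M N : Matrix (Fin n) (Fin n) ℝ} (hM : M.PosSemidef) (hN : N.PosSemidef) :
    (M + N).PosSemidef := by
  rw [posSemidef_real] at *
  refine ⟨by simp [Matrix.IsSymm, Matrix.transpose_add, hM.1.eq, hN.1.eq], fun v => ?_⟩
  rw [Matrix.add_mulVec, dotProduct_add]
  exact add_nonneg (hM.2 v) (hN.2 v)

lemma psd_smul {M : Matrix (Fin n) (Fin n) ℝ} (hM : M.PosSemidef) {c : ℝ} (hc : 0 ≤ c) :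
    (c • M).PosSemidef := by
  rw [posSemidef_real] at *
  refine ⟨by simp [Matrix.IsSymm, Matrix.transpose_smul, hM.1.eq], fun v => ?_⟩
  rw [Matrix.smul_mulVec, dotProduct_smul]
  exact mul_nonneg hc (hM.2 v)

lemma psd_congruence {M : Matrix (Fin n) (Fin n) ℝ} (hM : M.PosSemidef)
    (B : Matrix (Fin n) (Fin n) ℝ) : (B * M * Bᵀ).PosSemidef := by
  have := hM.mul_mul_conjTranspose_same B
  rwa [Matrix.conjTranspose_eq_transpose_of_trivial] at this

lemma smul_one_add_psd {M : Matrix (Fin n) (Fin n) ℝ} (hM : M.IsSymm) :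
    (nrm M • (1 : Matrix (Fin n) (Fin n) ℝ) + M).PosSemidef := by
  rw [posSemidef_real]
  constructor
  · simp [Matrix.IsSymm, Matrix.transpose_add, Matrix.transpose_smul, hM.eq]
  · intro v
    rw [Matrix.add_mulVec, dotProduct_add, Matrix.smul_mulVec,
      dotProduct_smul, Matrix.one_mulVec]
    have h1 := quad_abs_le M v
    have h2 : v ⬝ᵥ v = ∑ i, v i * v i := rfl
    have := neg_abs_le (v ⬝ᵥ M *ᵥ v)
    rw [h2, smul_eq_mul]
    nlinarith

lemma smul_one_sub_psd {M : Matrix (Fin n) (Fin n) ℝ} (hM : M.IsSymm) :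
    (nrm M • (1 : Matrix (Fin n) (Fin n) ℝ) - M).PosSemidef := by
  have h := smul_one_add_psd (M := -M) (by simp [Matrix.IsSymm, hM.eq])
  have hn : nrm (-M) = nrm M := by simp [nrm]
  rw [hn] at h
  rw [sub_eq_add_neg]
  exact h

lemma quad_single (M : Matrix (Fin n) (Fin n) ℝ) (i : Fin n) :
    (Pi.single i 1 : Fin n → ℝ) ⬝ᵥ M *ᵥ (Pi.single i 1) = M i i := by
  simp [Matrix.mulVec_single, single_dotProduct]

lemma sumsq_single (i : Fin n) :
    (∑ k, (Pi.single i 1 : Fin n → ℝ) k * (Pi.single i 1 : Fin n → ℝ) k) = 1 := by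
  simp [Pi.single_apply]

lemma quad_pair (M : Matrix (Fin n) (Fin n) ℝ) (i j : Fin n) :
    ((Pi.single i 1 + Pi.single j 1 : Fin n → ℝ)) ⬝ᵥ M *ᵥ (Pi.single i 1 + Pi.single j 1)
      = M i i + M i j + M j i + M j j := by
  rw [Matrix.mulVec_add, dotProduct_add, add_dotProduct, add_dotProduct]
  rw [Matrix.mulVec_single, Matrix.mulVec_single]
  simp only [single_dotProduct, mul_one, one_mul, MulOpposite.op_one, one_smul, Matrix.col_apply]
  ring

lemma sumsq_pair {i j : Fin n} (hij : i ≠ j) :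
    (∑ k, ((Pi.single i 1 + Pi.single j 1 : Fin n → ℝ)) k
      * ((Pi.single i 1 + Pi.single j 1 : Fin n → ℝ)) k) = 2 := by
  have : ∀ k, ((Pi.single i 1 + Pi.single j 1 : Fin n → ℝ)) k
      * ((Pi.single i 1 + Pi.single j 1 : Fin n → ℝ)) k
      = (if k = i then 1 else 0) + (if k = j then 1 else 0) := by
    intro k
    by_cases h1 : k = i <;> by_cases h2 : k = j
    · exact absurd (h1.symm.trans h2) hij
    all_goals simp [h1, h2, Pi.single_apply, hij, hij.symm]
  rw [Finset.sum_congr rfl fun k _ => this k, Finset.sum_add_distrib]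
  simp
  norm_num

lemma nrm_le_of_psd_pair {P M : Matrix (Fin n) (Fin n) ℝ} (hMs : M.IsSymm)
    (h1 : (P + M).PosSemidef) (h2 : (P - M).PosSemidef) :
    nrm M ≤ 2 * (n : ℝ)^2 * nrm P := by
  rw [posSemidef_real] at h1 h2
  have hq : ∀ v : Fin n → ℝ, |v ⬝ᵥ M *ᵥ v| ≤ nrm P * (∑ i, v i * v i) := by
    intro v
    have e1 := h1.2 v
    have e2 := h2.2 v
    rw [Matrix.add_mulVec, dotProduct_add] at e1
    rw [Matrix.sub_mulVec, dotProduct_sub] at e2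
    have e3 := quad_abs_le P v
    have e4 := le_abs_self (v ⬝ᵥ P *ᵥ v)
    have e5 := neg_abs_le (v ⬝ᵥ P *ᵥ v)
    exact abs_le.mpr ⟨by linarith, by linarith⟩
  have hentry : ∀ i j : Fin n, |M i j| ≤ 2 * nrm P := by
    intro i j
    by_cases hij : i = j
    · subst hij
      have := hq (Pi.single i 1)
      rw [quad_single, sumsq_single] at this
      have hP : 0 ≤ nrm P := nrm_nonneg P
      nlinarith
    · have hii := hq (Pi.single i 1)
      rw [quad_single, sumsq_single] at hii
      have hjj := hq (Pi.single j 1)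
      rw [quad_single, sumsq_single] at hjj
      have hpair := hq (Pi.single i 1 + Pi.single j 1)
      rw [quad_pair, sumsq_pair hij] at hpair
      have hsym : M j i = M i j := hMs.apply i j
      rw [hsym] at hpair
      have h5 : |2 * M i j| ≤ |M i i + M i j + M i j + M j j| + |M i i| + |M j j| := by
        have : 2 * M i j = (M i i + M i j + M i j + M j j) - M i i - M j j := by ring
        rw [this]
        calc |M i i + M i j + M i j + M j j - M i i - M j j|
            ≤ |M i i + M i j + M i j + M j j - M i i| + |M j j| := abs_sub _ _
          _ ≤ (|M i i + M i j + M i j + M j j| + |M i i|) + |M j j| := by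
              linarith [abs_sub (M i i + M i j + M i j + M j j) (M i i)]
    
      have habs2 : |2 * M i j| = 2 * |M i j| := by rw [abs_mul]; norm_num
      nlinarith [abs_nonneg (M i j)]
  calc nrm M = ∑ i, ∑ j, |M i j| := rfl
    _ ≤ ∑ i : Fin n, ∑ j : Fin n, 2 * nrm P :=
        Finset.sum_le_sum fun i _ => Finset.sum_le_sum fun j _ => hentry i j
    _ = 2 * (n:ℝ)^2 * nrm P := by
        simp [Finset.sum_const]
        ring

lemma exists_opBound (f : Matrix (Fin n) (Fin n) ℝ →ₗ[ℝ] Matrix (Fin n) (Fin n) ℝ) :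
    ∃ C : ℝ, 0 ≤ C ∧ ∀ Z, nrm (f Z) ≤ C * nrm Z := by
  refine ⟨∑ i, ∑ j, nrm (f (Matrix.single i j 1)), ?_, ?_⟩
  · exact Finset.sum_nonneg fun i _ => Finset.sum_nonneg fun j _ => nrm_nonneg _
  · intro Z
    have hZ : f Z = ∑ i, ∑ j, Z i j • f (Matrix.single i j 1) := by
      conv_lhs => rw [Matrix.matrix_eq_sum_single Z]
      rw [map_sum]
      refine Finset.sum_congr rfl fun i _ => ?_
      rw [map_sum]
      refine Finset.sum_congr rfl fun j _ => ?_
      rw [← LinearMap.map_smul]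
      congr 1
      rw [Matrix.smul_single, smul_eq_mul, mul_one]
    rw [hZ]
    refine (nrm_sum_le _ _).trans ?_
    rw [Finset.sum_mul]
    refine Finset.sum_le_sum fun i _ => ?_
    refine (nrm_sum_le _ _).trans ?_
    rw [Finset.sum_mul]
    refine Finset.sum_le_sum fun j _ => ?_
    rw [nrm_smul]
    calc |Z i j| * nrm (f (Matrix.single i j 1))
        ≤ nrm Z * nrm (f (Matrix.single i j 1)) :=
          mul_le_mul_of_nonneg_right (entry_abs_le_nrm Z i j) (nrm_nonneg _)
      _ = nrm (f (Matrix.single i j 1)) * nrm Z := mul_comm _ _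

lemma neumann_psd (T : Matrix (Fin n) (Fin n) ℝ → Matrix (Fin n) (Fin n) ℝ)
    (hTsymm : ∀ Z, Z.IsSymm → (T Z).IsSymm)
    (hTadd : ∀ Z W, Z.IsSymm → W.IsSymm → T (Z + W) = T Z + T W)
    (hTpos : ∀ Z, Z.PosSemidef → (T Z).PosSemidef)
    {r : ℝ} (hr0 : 0 ≤ r) (hr1 : r < 1)
    (hTn : ∀ Z, Z.IsSymm → nrm (T Z) ≤ r * nrm Z)
    {C X : Matrix (Fin n) (Fin n) ℝ} (hC : C.PosSemidef) (hXs : X.IsSymm)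
    (hfix : X = C + T X) : X.PosSemidef := by
  have hCs : C.IsSymm := ((posSemidef_real C).mp hC).1
  set S : ℕ → Matrix (Fin n) (Fin n) ℝ := fun k => Nat.rec 0 (fun _ Sk => C + T Sk) k with hS
  have hS0 : S 0 = 0 := rfl
  have hSsucc : ∀ k, S (k + 1) = C + T (S k) := fun k => rfl
  have key : ∀ k, (S k).PosSemidef ∧ (S k).IsSymm ∧ (X - S k).IsSymm ∧
      nrm (X - S k) ≤ r ^ k * nrm X := by
    intro k
    induction k with
    | zero =>
      refine ⟨by rw [hS0]; exact Matrix.PosSemidef.zero, by simp [hS0, Matrix.IsSymm], ?_, ?_⟩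
      · simpa [hS0] using hXs
      · simp [hS0]
    | succ k ih =>
      obtain ⟨hpsd, hsymm, hdsymm, hnrm⟩ := ih
      have hsplit : T X = T (S k) + T (X - S k) := by
        have : X = S k + (X - S k) := by abel
        calc T X = T (S k + (X - S k)) := by rw [← this]
          _ = T (S k) + T (X - S k) := hTadd _ _ hsymm hdsymm
      have hdiff : X - S (k + 1) = T (X - S k) := by
        rw [hSsucc]
        have : X - (C + T (S k)) = T X - T (S k) := by
          conv_lhs => rw [hfix]
          abel
        rw [this, hsplit]
        abel
      refine ⟨?_, ?_, ?_, ?_⟩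
      · rw [hSsucc]; exact psd_add hC (hTpos _ hpsd)
      · rw [hSsucc]
        simp [Matrix.IsSymm, Matrix.transpose_add, hCs.eq, (hTsymm _ hsymm).eq]
      · rw [hdiff]; exact hTsymm _ hdsymm
      · rw [hdiff, pow_succ, mul_comm (r ^ k) r, mul_assoc]
        exact (hTn _ hdsymm).trans (mul_le_mul_of_nonneg_left hnrm hr0)
  rw [posSemidef_real]
  refine ⟨hXs, fun v => ?_⟩
  have hbound : ∀ k : ℕ, -(r ^ k * nrm X * (∑ i, v i * v i)) ≤ v ⬝ᵥ X *ᵥ v := by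
    intro k
    obtain ⟨hpsd, hsymm, hdsymm, hnrm⟩ := key k
    have h1 : v ⬝ᵥ X *ᵥ v = v ⬝ᵥ (S k) *ᵥ v + v ⬝ᵥ (X - S k) *ᵥ v := by
      have : X = S k + (X - S k) := by abel
      conv_lhs => rw [this]
      rw [Matrix.add_mulVec, dotProduct_add]
    have h2 : 0 ≤ v ⬝ᵥ (S k) *ᵥ v := ((posSemidef_real _).mp hpsd).2 v
    have h3 : |v ⬝ᵥ (X - S k) *ᵥ v| ≤ nrm (X - S k) * (∑ i, v i * v i) := quad_abs_le _ v
    have h4 : nrm (X - S k) * (∑ i, v i * v i) ≤ r ^ k * nrm X * (∑ i, v i * v i) := by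
      refine mul_le_mul_of_nonneg_right hnrm ?_
      exact Finset.sum_nonneg fun i _ => mul_self_nonneg _
    have := neg_abs_le (v ⬝ᵥ (X - S k) *ᵥ v)
    linarith
  have hlim : Filter.Tendsto (fun k : ℕ => -(r ^ k * nrm X * (∑ i, v i * v i)))
      Filter.atTop (nhds 0) := by
    have h0 := tendsto_pow_atTop_nhds_zero_of_lt_one hr0 hr1
    have := h0.mul_const (nrm X * (∑ i, v i * v i))
    simp only [zero_mul] at this
    have h2 := this.neg
    simp only [neg_zero] at h2
    convert h2 using 2 with k
    ring
  exact le_of_tendsto' hlim hbound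

def symmSubmodule (n : ℕ) : Submodule ℝ (Matrix (Fin n) (Fin n) ℝ) where
  carrier := {X | X.IsSymm}
  add_mem' := fun ha hb => ha.add hb
  zero_mem' := Matrix.isSymm_zero
  smul_mem' := fun c _ hx => hx.smul c

theorem rp_add (L Pi : Matrix (Fin n) (Fin n) ℝ →ₗ[ℝ] Matrix (Fin n) (Fin n) ℝ)
    (hLs : ∀ X : Matrix (Fin n) (Fin n) ℝ, X.IsSymm → (L X).IsSymm)
    (hPs : ∀ X : Matrix (Fin n) (Fin n) ℝ, X.IsSymm → (Pi X).IsSymm)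
    (hLres : ResolventPositive (fun X => L X))
    (hPpos : ∀ X : Matrix (Fin n) (Fin n) ℝ, X.PosSemidef → (Pi X).PosSemidef) :
    ResolventPositive (fun X => L X + Pi X) := by
  obtain ⟨α₀, hα₀⟩ := hLres
  obtain ⟨CL, hCL0, hCL⟩ := exists_opBound L
  obtain ⟨CP, hCP0, hCP⟩ := exists_opBound Pi
  set Kc : ℝ := 2 * (n : ℝ) ^ 2 * (n : ℝ) with hKc
  have hKc0 : 0 ≤ Kc := by positivity
  refine ⟨max α₀ (CL + 2 * (Kc * CP + Kc + 1)), fun α hα => ?_⟩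
  have hαα₀ : α₀ < α := lt_of_le_of_lt (le_max_left _ _) hα
  have hαbig : CL + 2 * (Kc * CP + Kc + 1) < α := lt_of_le_of_lt (le_max_right _ _) hα
  have hαCL : CL < α := by nlinarith
  have hden : (0:ℝ) < α - CL := by linarith
  have hαpos : 0 < α := by nlinarith
  obtain ⟨hEU, hPos⟩ := hα₀ α hαα₀
  simp only at hEU hPos
  -- the resolvent of L
  have hRex : ∀ Y : Matrix (Fin n) (Fin n) ℝ, Y.IsSymm →
      ∃ X, (X.IsSymm ∧ α • X - L X = Y) ∧
        ∀ X', (X'.IsSymm ∧ α • X' - L X' = Y) → X' = X := fun Y hY => hEU Y hY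
  choose R hRsol hRuniq using hRex
  -- the matrix E = R 1 and its size
  set E := R 1 Matrix.isSymm_one with hE
  have hEsol := hRsol 1 Matrix.isSymm_one
  have hEpsd : E.PosSemidef := hPos E 1 hEsol.1 hEsol.2 Matrix.PosSemidef.one
  have hEsize : nrm E ≤ (n : ℝ) / (α - CL) := by
    have h1 : α • E = 1 + L E := by
      have := hEsol.2
      rw [sub_eq_iff_eq_add] at this
      rw [this]
    have h2 : α * nrm E = nrm (α • E) := by
      rw [nrm_smul, abs_of_pos hαpos]
    have h3 : nrm (α • E) ≤ (n : ℝ) + CL * nrm E := by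
      rw [h1]
      refine (nrm_add_le _ _).trans ?_
      rw [nrm_one]
      exact add_le_add_right (hCL E) _
    rw [le_div_iff₀ hden]
    nlinarith
  -- main resolvent estimate
  have hRbound : ∀ (Y : Matrix (Fin n) (Fin n) ℝ) (hY : Y.IsSymm),
      nrm (R Y hY) ≤ Kc / (α - CL) * nrm Y := by
    intro Y hY
    set X := R Y hY with hX
    obtain ⟨hXs, hXeq⟩ := hRsol Y hY
    set s := nrm Y with hs
    have hs0 : 0 ≤ s := nrm_nonneg Y
    have hsolp : α • (s • E + X) - L (s • E + X) = s • (1 : Matrix (Fin n) (Fin n) ℝ) + Y := by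
      rw [map_add, LinearMap.map_smul]
      rw [← hXeq, ← hEsol.2]
      module
    have hsolm : α • (s • E - X) - L (s • E - X) = s • (1 : Matrix (Fin n) (Fin n) ℝ) - Y := by
      rw [map_sub, LinearMap.map_smul]
      rw [← hXeq, ← hEsol.2]
      module
    have hp : (s • E + X).PosSemidef :=
      hPos _ _ ((hEsol.1.smul s).add hXs) hsolp (smul_one_add_psd hY)
    have hm : (s • E - X).PosSemidef :=
      hPos _ _ ((hEsol.1.smul s).sub hXs) hsolm (smul_one_sub_psd hY)
    have hbd := nrm_le_of_psd_pair hXs hp hm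
    have hsE : nrm (s • E) = s * nrm E := by rw [nrm_smul, abs_of_nonneg hs0]
    rw [hsE] at hbd
    calc nrm X ≤ 2 * (n:ℝ)^2 * (s * nrm E) := hbd
      _ ≤ 2 * (n:ℝ)^2 * (s * ((n:ℝ) / (α - CL))) := by
          refine mul_le_mul_of_nonneg_left ?_ (by positivity)
          exact mul_le_mul_of_nonneg_left hEsize hs0
      _ = Kc / (α - CL) * s := by rw [hKc]; field_simp
  have hfrac : Kc / (α - CL) * CP ≤ 1 / 2 := by
    rw [div_mul_eq_mul_div, div_le_div_iff₀ hden (by norm_num)]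
    nlinarith
  -- key injectivity statement
  have hkey : ∀ X : Matrix (Fin n) (Fin n) ℝ, X.IsSymm → α • X - (L X + Pi X) = 0 → X = 0 := by
    intro X hXs h0
    have hPiXs : (Pi X).IsSymm := hPs X hXs
    have heq : α • X - L X = Pi X := by
      rw [← sub_eq_zero]
      rw [← h0]; abel
    have hXuniq : X = R (Pi X) hPiXs := hRuniq (Pi X) hPiXs X ⟨hXs, heq⟩
    have h1 : nrm X ≤ Kc / (α - CL) * nrm (Pi X) := by
      have := hRbound (Pi X) hPiXs
      rwa [← hXuniq] at this
    have h2 : nrm (Pi X) ≤ CP * nrm X := hCP X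
    have h3 : nrm X ≤ 1 / 2 * nrm X := by
      calc nrm X ≤ Kc / (α - CL) * (CP * nrm X) := h1.trans (by
            exact mul_le_mul_of_nonneg_left h2 (by positivity))
        _ = (Kc / (α - CL) * CP) * nrm X := by ring
        _ ≤ 1 / 2 * nrm X := mul_le_mul_of_nonneg_right hfrac (nrm_nonneg X)
    exact eq_zero_of_nrm_le X (by linarith)
  constructor
  · -- existence and uniqueness
    intro Y hY
    -- surjectivity via finite dimension
    set G : Matrix (Fin n) (Fin n) ℝ →ₗ[ℝ] Matrix (Fin n) (Fin n) ℝ :=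
      α • LinearMap.id - (L + Pi) with hG
    have hGapp : ∀ X, G X = α • X - (L X + Pi X) := fun X => by
      simp [hG, LinearMap.sub_apply, LinearMap.smul_apply, LinearMap.add_apply]
    have hGmaps : ∀ X ∈ symmSubmodule n, G X ∈ symmSubmodule n := by
      intro X hX
      have hX' : X.IsSymm := hX
      show (G X).IsSymm
      rw [hGapp]
      exact (hX'.smul α).sub ((hLs X hX').add (hPs X hX'))
    set G' : symmSubmodule n →ₗ[ℝ] symmSubmodule n := G.restrict hGmaps with hG'
    have hinj : Function.Injective G' := by
      refine (injective_iff_map_eq_zero G').mpr ?_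
      intro x hx
      have hx1 : G x.1 = 0 := by
        have h := congrArg Subtype.val hx
        simpa [G', LinearMap.restrict_apply] using h
      have hz := hkey x.1 x.2 (by rw [← hGapp]; exact hx1)
      exact Subtype.ext hz
    have hsurj : Function.Surjective G' := LinearMap.injective_iff_surjective.mp hinj
    obtain ⟨x, hxeq⟩ := hsurj ⟨Y, hY⟩
    have hxsol : α • x.1 - (L x.1 + Pi x.1) = Y := by
      have h := congrArg Subtype.val hxeq
      rw [← hGapp]
      simpa [G', LinearMap.restrict_apply] using h
    refine ⟨x.1, ⟨x.2, hxsol⟩, ?_⟩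
    rintro X' ⟨hX's, hX'eq⟩
    have hX'eq' : α • X' - (L X' + Pi X') = Y := hX'eq
    have hdiff : α • (X' - x.1) - (L (X' - x.1) + Pi (X' - x.1)) = 0 := by
      have hsplit : α • (X' - x.1) - (L (X' - x.1) + Pi (X' - x.1))
          = (α • X' - (L X' + Pi X')) - (α • x.1 - (L x.1 + Pi x.1)) := by
        rw [map_sub, map_sub, smul_sub]; abel
      rw [hsplit, hX'eq', hxsol, sub_self]
    have hz := hkey _ (hX's.sub x.2) hdiff
    have : X' = x.1 := by rwa [sub_eq_zero] at hz
    rw [this]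
  · -- positivity
    intro X Y hXs heq hYpsd
    have heq' : α • X - (L X + Pi X) = Y := heq
    have hYs : Y.IsSymm := by
      rw [← heq']
      exact (hXs.smul α).sub ((hLs X hXs).add (hPs X hXs))
    set Rf : Matrix (Fin n) (Fin n) ℝ → Matrix (Fin n) (Fin n) ℝ :=
      fun W => if h : W.IsSymm then R W h else 0 with hRf
    have hRfsol : ∀ (W : Matrix (Fin n) (Fin n) ℝ) (h : W.IsSymm), Rf W = R W h :=
      fun W h => dif_pos h
    set T : Matrix (Fin n) (Fin n) ℝ → Matrix (Fin n) (Fin n) ℝ :=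
      fun Z => Rf (Pi Z) with hT
    set C := Rf Y with hC
    have hCR : C = R Y hYs := hRfsol Y hYs
    have hCsol := hRsol Y hYs
    have hCpsd : C.PosSemidef := by rw [hCR]; exact hPos _ _ hCsol.1 hCsol.2 hYpsd
    have hlinsplit : ∀ a b : Matrix (Fin n) (Fin n) ℝ,
        α • (a + b) - L (a + b) = (α • a - L a) + (α • b - L b) := by
      intro a b
      rw [map_add, smul_add]; abel
    have hfix : X = C + T X := by
      have hW : (Y + Pi X).IsSymm := hYs.add (hPs X hXs)
      have h1 : X = R (Y + Pi X) hW := by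
        refine hRuniq _ hW X ⟨hXs, ?_⟩
        rw [← heq']; abel
      have hTX : T X = R (Pi X) (hPs X hXs) := hRfsol _ _
      have h2 : C + T X = R (Y + Pi X) hW := by
        refine hRuniq _ hW _ ⟨?_, ?_⟩
        · rw [hCR, hTX]
          exact (hRsol Y hYs).1.add (hRsol (Pi X) (hPs X hXs)).1
        · rw [hlinsplit, hCR, hTX, (hRsol Y hYs).2, (hRsol (Pi X) (hPs X hXs)).2]
      rw [h2]
      exact h1
    refine neumann_psd T ?_ ?_ ?_ (r := 1/2) (by norm_num) (by norm_num) ?_ hCpsd hXs hfix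
    · intro Z hZ
      rw [hT]; simp only
      rw [hRfsol _ (hPs Z hZ)]
      exact (hRsol _ _).1
    · intro Z W hZ hW
      have hZ' := hPs Z hZ
      have hW' := hPs W hW
      have hsum : (Pi Z + Pi W).IsSymm := hZ'.add hW'
      rw [hT]; simp only
      rw [map_add, hRfsol _ hsum, hRfsol _ hZ', hRfsol _ hW']
      symm
      refine hRuniq _ hsum _ ⟨?_, ?_⟩
      · exact (hRsol _ hZ').1.add (hRsol _ hW').1
      · rw [hlinsplit, (hRsol _ hZ').2, (hRsol _ hW').2]
    · intro Z hZpsd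
      have hZs : Z.IsSymm := ((posSemidef_real Z).mp hZpsd).1
      rw [hT]; simp only
      rw [hRfsol _ (hPs Z hZs)]
      exact hPos _ _ (hRsol _ _).1 (hRsol _ _).2 (hPpos Z hZpsd)
    · intro Z hZ
      rw [hT]; simp only
      rw [hRfsol _ (hPs Z hZ)]
      calc nrm (R (Pi Z) (hPs Z hZ)) ≤ Kc / (α - CL) * nrm (Pi Z) := hRbound _ _
        _ ≤ Kc / (α - CL) * (CP * nrm Z) :=
            mul_le_mul_of_nonneg_left (hCP Z) (by positivity)
        _ = (Kc / (α - CL) * CP) * nrm Z := by ring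
        _ ≤ 1 / 2 * nrm Z := mul_le_mul_of_nonneg_right hfrac (nrm_nonneg Z)

theorem lyap_rp (A : Matrix (Fin n) (Fin n) ℝ) :
    ResolventPositive (fun X => A * X + X * Aᵀ) := by
  refine ⟨2 * nrm A + 2 * (n : ℝ) * (nrm A + 1), fun α hα => ?_⟩
  have hA0 : 0 ≤ nrm A := nrm_nonneg A
  have hn0 : (0:ℝ) ≤ (n:ℝ) := Nat.cast_nonneg n
  have hα2A : 2 * nrm A < α := by nlinarith
  have hαA : nrm A < α := by nlinarith
  have hαpos : 0 < α := by nlinarith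
  have hdenA : (0:ℝ) < α - nrm A := by linarith
  -- B = α•1 - A is invertible
  set B : Matrix (Fin n) (Fin n) ℝ := α • 1 - A with hB
  have hmulVec : ∀ v : Fin n → ℝ, B *ᵥ v = α • v - A *ᵥ v := by
    intro v
    rw [hB, Matrix.sub_mulVec, Matrix.smul_mulVec, Matrix.one_mulVec]
  have hBker : ∀ v : Fin n → ℝ, B *ᵥ v = 0 → v = 0 := by
    intro v hv
    rw [hmulVec, sub_eq_zero] at hv
    have hsum : α * (∑ i, |v i|) ≤ nrm A * (∑ i, |v i|) := by
      have h1 : ∀ i, α * |v i| = |(A *ᵥ v) i| := by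
        intro i
        rw [← hv]
        simp only [Pi.smul_apply, smul_eq_mul, abs_mul, abs_of_pos hαpos]
      have h2 : ∀ i, |(A *ᵥ v) i| ≤ ∑ j, |A i j| * |v j| := by
        intro i
        rw [Matrix.mulVec, dotProduct]
        refine (Finset.abs_sum_le_sum_abs _ _).trans ?_
        exact le_of_eq (Finset.sum_congr rfl fun j _ => abs_mul _ _)
      calc α * (∑ i, |v i|) = ∑ i, |(A *ᵥ v) i| := by
            rw [Finset.mul_sum]; exact Finset.sum_congr rfl fun i _ => h1 i
        _ ≤ ∑ i, ∑ j, |A i j| * |v j| := Finset.sum_le_sum fun i _ => h2 i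
        _ = ∑ j, (∑ i, |A i j|) * |v j| := by
            rw [Finset.sum_comm]
            exact Finset.sum_congr rfl fun j _ => by rw [Finset.sum_mul]
        _ ≤ ∑ j, nrm A * |v j| := by
            refine Finset.sum_le_sum fun j _ => ?_
            exact mul_le_mul_of_nonneg_right (colsum_le_nrm A j) (abs_nonneg _)
        _ = nrm A * (∑ i, |v i|) := by rw [Finset.mul_sum]
    have hvs0 : (∑ i, |v i|) ≤ 0 := by nlinarith [Finset.sum_nonneg (fun i (_ : i ∈ Finset.univ) => abs_nonneg (v i))]
    funext i
    have : |v i| ≤ 0 := le_trans (Finset.single_le_sum (f := fun i => |v i|)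
      (fun k _ => abs_nonneg _) (Finset.mem_univ i)) hvs0
    simpa using le_antisymm this (abs_nonneg _)
  have hBinj : Function.Injective (B.mulVec) := by
    intro v w hvw
    have : B *ᵥ (v - w) = 0 := by
      rw [Matrix.mulVec_sub, hvw, sub_self]
    have := hBker _ this
    exact sub_eq_zero.mp this
  have hBunit : IsUnit B := Matrix.mulVec_injective_iff_isUnit.mp hBinj
  set B' : Matrix (Fin n) (Fin n) ℝ := ↑hBunit.unit⁻¹ with hB'def
  have hBB' : B * B' = 1 := by
    have h := hBunit.unit.mul_inv
    rwa [hBunit.unit_spec] at h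
  have hB'B : B' * B = 1 := by
    have h := hBunit.unit.inv_mul
    rwa [hBunit.unit_spec] at h
  -- size of B'
  have hB'size : nrm B' ≤ (n : ℝ) / (α - nrm A) := by
    have h1 : α • B' = 1 + B' * A := by
      have : B' * (α • 1 - A) = 1 := hB'B
      rw [mul_sub, Matrix.mul_smul, mul_one] at this
      rw [← this]; abel
    have h2 : α * nrm B' = nrm (α • B') := by rw [nrm_smul, abs_of_pos hαpos]
    have h3 : nrm (α • B') ≤ (n:ℝ) + nrm B' * nrm A := by
      rw [h1]
      refine (nrm_add_le _ _).trans ?_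
      rw [nrm_one]
      exact add_le_add_right ((nrm_mul_le _ _)) _
    rw [le_div_iff₀ hdenA]
    nlinarith
  set q : ℝ := nrm (B' * A) with hq
  have hq0 : 0 ≤ q := nrm_nonneg _
  have hq2 : q ≤ 1 / 2 := by
    have h1 : q ≤ nrm B' * nrm A := nrm_mul_le _ _
    have h2 : nrm B' * nrm A ≤ (n:ℝ) / (α - nrm A) * nrm A :=
      mul_le_mul_of_nonneg_right hB'size hA0
    have h3 : (n:ℝ) / (α - nrm A) * nrm A ≤ 1 / 2 := by
      rw [div_mul_eq_mul_div, div_le_div_iff₀ hdenA (by norm_num)]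
      nlinarith
    linarith
  -- the operator α•id - Lyap is bijective
  set FL : Matrix (Fin n) (Fin n) ℝ →ₗ[ℝ] Matrix (Fin n) (Fin n) ℝ :=
    α • LinearMap.id - (LinearMap.mulLeft ℝ A + LinearMap.mulRight ℝ Aᵀ) with hFL
  have hFLapp : ∀ X, FL X = α • X - (A * X + X * Aᵀ) := by
    intro X
    simp [hFL, LinearMap.sub_apply, LinearMap.smul_apply, LinearMap.add_apply,
      LinearMap.mulLeft_apply, LinearMap.mulRight_apply]
  have hFinj : ∀ X : Matrix (Fin n) (Fin n) ℝ, FL X = 0 → X = 0 := by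
    intro X hX
    rw [hFLapp, sub_eq_zero] at hX
    have h1 : α * nrm X = nrm (A * X + X * Aᵀ) := by
      rw [← hX, nrm_smul, abs_of_pos hαpos]
    have h2 : nrm (A * X + X * Aᵀ) ≤ 2 * nrm A * nrm X := by
      refine (nrm_add_le _ _).trans ?_
      have := nrm_mul_le A X
      have h4 := nrm_mul_le X Aᵀ
      rw [nrm_transpose] at h4
      nlinarith [nrm_nonneg X]
    refine eq_zero_of_nrm_le X ?_
    nlinarith [nrm_nonneg X]
  have hFLinj : Function.Injective FL := by
    refine (injective_iff_map_eq_zero FL).mpr ?_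
    exact fun a ha => hFinj a ha
  have hFLsurj : Function.Surjective FL := LinearMap.injective_iff_surjective.mp hFLinj
  constructor
  · intro Y hY
    obtain ⟨X, hX⟩ := hFLsurj Y
    have hXs : X.IsSymm := by
      have hT : FL Xᵀ = Y := by
        rw [hFLapp]
        have : (α • X - (A * X + X * Aᵀ))ᵀ = α • Xᵀ - (A * Xᵀ + Xᵀ * Aᵀ) := by
          simp [Matrix.transpose_sub, Matrix.transpose_add, Matrix.transpose_smul,
            Matrix.transpose_mul]
          abel
        rw [← this, ← hFLapp, hX, hY.eq]
      exact hFLinj (by rw [hT, hX] : FL Xᵀ = FL X)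
    refine ⟨X, ⟨hXs, by rw [← hFLapp]; exact hX⟩, ?_⟩
    rintro X' ⟨hX's, hX'eq⟩
    refine hFLinj ?_
    rw [hX, hFLapp]
    exact hX'eq
  · intro X Y hXs heq hYpsd
    have heq' : α • X - (A * X + X * Aᵀ) = Y := heq
    -- key identity
    have hiden : B * X * Bᵀ = α • Y + A * X * Aᵀ := by
      rw [hB, ← heq']
      simp only [Matrix.transpose_sub, Matrix.transpose_smul, Matrix.transpose_one, sub_mul,
        mul_sub, Matrix.smul_mul, Matrix.mul_smul, smul_sub, smul_add, one_mul, mul_one,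
        smul_smul]
      abel
    have hfix : X = α • (B' * Y * B'ᵀ) + (B' * A) * X * (B' * A)ᵀ := by
      have h1 : X = B' * (B * X * Bᵀ) * B'ᵀ := by
        have hBt : Bᵀ * B'ᵀ = 1 := by rw [← Matrix.transpose_mul, hB'B, Matrix.transpose_one]
        calc X = 1 * X * 1 := by rw [one_mul, mul_one]
          _ = (B' * B) * X * (Bᵀ * B'ᵀ) := by rw [hB'B, hBt]
          _ = B' * (B * X * Bᵀ) * B'ᵀ := by noncomm_ring
      rw [hiden] at h1
      calc X = B' * (α • Y + A * X * Aᵀ) * B'ᵀ := h1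
        _ = α • (B' * Y * B'ᵀ) + (B' * A) * X * (B' * A)ᵀ := by
            rw [Matrix.transpose_mul]
            simp only [mul_add, add_mul, Matrix.mul_smul, Matrix.smul_mul]
            noncomm_ring
    set T : Matrix (Fin n) (Fin n) ℝ → Matrix (Fin n) (Fin n) ℝ :=
      fun Z => (B' * A) * Z * (B' * A)ᵀ with hT
    have hCpsd : (α • (B' * Y * B'ᵀ)).PosSemidef :=
      psd_smul (psd_congruence hYpsd B') hαpos.le
    refine neumann_psd T ?_ ?_ ?_ (r := 1/2) (by norm_num) (by norm_num) ?_ hCpsd hXs hfix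
    · intro Z hZ
      rw [hT]
      simp only [Matrix.IsSymm, Matrix.transpose_mul, Matrix.transpose_transpose]
      rw [hZ.eq]
      noncomm_ring
    · intro Z W _ _
      rw [hT]
      simp only
      noncomm_ring
    · intro Z hZpsd
      exact psd_congruence hZpsd _
    · intro Z _
      rw [hT]
      simp only
      calc nrm ((B' * A) * Z * (B' * A)ᵀ)
          ≤ nrm ((B' * A) * Z) * nrm ((B' * A)ᵀ) := nrm_mul_le _ _
        _ ≤ (nrm (B' * A) * nrm Z) * nrm ((B' * A)ᵀ) :=
            mul_le_mul_of_nonneg_right (nrm_mul_le _ _) (nrm_nonneg _)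
        _ = q * nrm Z * q := by rw [nrm_transpose, hq]
        _ ≤ 1 / 2 * nrm Z := by
            nlinarith [nrm_nonneg Z, mul_le_mul_of_nonneg_right
              (mul_le_mul hq2 hq2 hq0 (by norm_num)) (nrm_nonneg Z)]

lemma key_decomp {q : ℕ} (N : Fin q → Matrix (Fin n) (Fin n) ℝ)
    (K : Matrix (Fin q) (Fin q) ℝ) (Bq : Matrix (Fin q) (Fin q) ℝ)
    (hBq : K = Bqᴴ * Bq) (X : Matrix (Fin n) (Fin n) ℝ) :
    (∑ i, ∑ j, K i j • (N i * X * (N j)ᵀ))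
      = ∑ l, (∑ i, Bq l i • N i) * X * (∑ j, Bq l j • N j)ᵀ := by
  have hKij : ∀ i j, K i j = ∑ l, Bq l i * Bq l j := by
    intro i j
    rw [hBq]
    simp [Matrix.mul_apply, Matrix.conjTranspose_apply]
  have hterm : ∀ l, (∑ i, Bq l i • N i) * X * (∑ j, Bq l j • N j)ᵀ
      = ∑ i, ∑ j, (Bq l i * Bq l j) • (N i * X * (N j)ᵀ) := by
    intro l
    rw [Matrix.transpose_sum]
    rw [Finset.sum_mul]
    rw [Finset.sum_mul]
    refine Finset.sum_congr rfl fun i _ => ?_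
    rw [Finset.mul_sum]
    refine Finset.sum_congr rfl fun j _ => ?_
    rw [Matrix.transpose_smul]
    rw [Matrix.smul_mul, Matrix.smul_mul, Matrix.mul_smul, smul_smul]
  calc (∑ i, ∑ j, K i j • (N i * X * (N j)ᵀ))
      = ∑ i, ∑ j, ∑ l, (Bq l i * Bq l j) • (N i * X * (N j)ᵀ) := by
        refine Finset.sum_congr rfl fun i _ => Finset.sum_congr rfl fun j _ => ?_
        rw [hKij, Finset.sum_smul]
    _ = ∑ i, ∑ l, ∑ j, (Bq l i * Bq l j) • (N i * X * (N j)ᵀ) :=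
        Finset.sum_congr rfl fun i _ => Finset.sum_comm
    _ = ∑ l, ∑ i, ∑ j, (Bq l i * Bq l j) • (N i * X * (N j)ᵀ) := Finset.sum_comm
    _ = ∑ l, (∑ i, Bq l i • N i) * X * (∑ j, Bq l j • N j)ᵀ := by
        exact Finset.sum_congr rfl fun l _ => (hterm l).symm

lemma isSymm_lyap (A : Matrix (Fin n) (Fin n) ℝ) {X : Matrix (Fin n) (Fin n) ℝ}
    (hX : X.IsSymm) : (A * X + X * Aᵀ).IsSymm := by
  rw [Matrix.IsSymm, Matrix.transpose_add, Matrix.transpose_mul, Matrix.transpose_mul,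
    Matrix.transpose_transpose, hX.eq]
  exact add_comm _ _

end RPAux

open RPAux in
/-- The sum of a resolvent positive operator and a positive operator is resolvent positive;
in particular, the generalized Lyapunov operator
`X ↦ A X + X Aᵀ + c Σ_{i,j} k_{ij} N_i X N_jᵀ` (with `K = (k_{ij})` symmetric positive
semidefinite and `c ≥ 0`) is resolvent positive. -/
theorem resolventPositive_add_positive {n : ℕ}
    (L Pi' : Matrix (Fin n) (Fin n) ℝ →ₗ[ℝ] Matrix (Fin n) (Fin n) ℝ)
    (hLsymm : ∀ X : Matrix (Fin n) (Fin n) ℝ, X.IsSymm → (L X).IsSymm)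
    (hPisymm : ∀ X : Matrix (Fin n) (Fin n) ℝ, X.IsSymm → (Pi' X).IsSymm)
    (hLres : ResolventPositive (fun X => L X))
    (hPipos : ∀ X : Matrix (Fin n) (Fin n) ℝ, X.PosSemidef → (Pi' X).PosSemidef) :
    ResolventPositive (fun X => L X + Pi' X) ∧
    ∀ (q : ℕ) (A : Matrix (Fin n) (Fin n) ℝ) (N : Fin q → Matrix (Fin n) (Fin n) ℝ)
      (K : Matrix (Fin q) (Fin q) ℝ), K.PosSemidef → ∀ c : ℝ, 0 ≤ c →
      ResolventPositive (fun X : Matrix (Fin n) (Fin n) ℝ =>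
        A * X + X * Aᵀ + c • ∑ i : Fin q, ∑ j : Fin q, K i j • (N i * X * (N j)ᵀ)) := by
  
  constructor
  · exact rp_add L Pi' hLsymm hPisymm hLres hPipos
  · intro q A N K hK c hc
    obtain ⟨Bq, hBq⟩ : ∃ Bq : Matrix (Fin q) (Fin q) ℝ, K = Bqᴴ * Bq := by
      open scoped MatrixOrder Matrix.Norms.L2Operator in
      exact CStarAlgebra.nonneg_iff_eq_star_mul_self.mp hK.nonneg
    set P : Fin q → Matrix (Fin n) (Fin n) ℝ := fun l => ∑ i, Bq l i • N i with hP
    set LA : Matrix (Fin n) (Fin n) ℝ →ₗ[ℝ] Matrix (Fin n) (Fin n) ℝ :=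
      { toFun := fun X => A * X + X * Aᵀ
        map_add' := fun X Y => by noncomm_ring
        map_smul' := fun a X => by
          simp [Matrix.smul_mul, Matrix.mul_smul, smul_add] } with hLA
    set PiK : Matrix (Fin n) (Fin n) ℝ →ₗ[ℝ] Matrix (Fin n) (Fin n) ℝ :=
      { toFun := fun X => c • ∑ l, P l * X * (P l)ᵀ
        map_add' := fun X Y => by
          simp [mul_add, add_mul, Finset.sum_add_distrib, smul_add]
        map_smul' := fun a X => by
          simp only [Matrix.smul_mul, Matrix.mul_smul, RingHom.id_apply, ← Finset.smul_sum]
          rw [smul_comm] } with hPiK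
    have hLAs : ∀ X : Matrix (Fin n) (Fin n) ℝ, X.IsSymm → (LA X).IsSymm :=
      fun X hX => isSymm_lyap A hX
    have hcongrsymm : ∀ (M Z : Matrix (Fin n) (Fin n) ℝ), Z.IsSymm → (M * Z * Mᵀ).IsSymm := by
      intro M Z hZ
      rw [Matrix.IsSymm, Matrix.transpose_mul, Matrix.transpose_mul,
        Matrix.transpose_transpose, hZ.eq, Matrix.mul_assoc]
    have hPiKs : ∀ X : Matrix (Fin n) (Fin n) ℝ, X.IsSymm → (PiK X).IsSymm := by
      intro X hX
      show (c • ∑ l, P l * X * (P l)ᵀ).IsSymm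
      refine Matrix.IsSymm.smul ?_ c
      rw [Matrix.IsSymm, Matrix.transpose_sum]
      exact Finset.sum_congr rfl fun l _ => (hcongrsymm (P l) X hX)
    have hPiKpos : ∀ X : Matrix (Fin n) (Fin n) ℝ, X.PosSemidef → (PiK X).PosSemidef := by
      intro X hX
      show (c • ∑ l, P l * X * (P l)ᵀ).PosSemidef
      refine psd_smul ?_ hc
      refine Finset.sum_induction _ _ (fun a b ha hb => psd_add ha hb)
        Matrix.PosSemidef.zero (fun l _ => psd_congruence hX (P l))
    have hLAres : ResolventPositive (fun X => LA X) := lyap_rp A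
    have h1 := rp_add LA PiK hLAs hPiKs hLAres hPiKpos
    have hfun : (fun X => LA X + PiK X)
        = (fun X : Matrix (Fin n) (Fin n) ℝ =>
            A * X + X * Aᵀ + c • ∑ i : Fin q, ∑ j : Fin q, K i j • (N i * X * (N j)ᵀ)) := by
      funext X
      show A * X + X * Aᵀ + c • ∑ l, P l * X * (P l)ᵀ = _
      rw [key_decomp N K Bq hBq X]
    rwa [hfun] at h1
end

section
/- Let P and Q be symmetric positive definite real n×n matrices. Then there exist an invertible real n×n matrix S and a diagonal real n×n matrix D with strictly positive diagonal entries such that S P Sᵀ = D, (S⁻¹)ᵀ Q S⁻¹ = D, and D² = S (P Q) S⁻¹. In particular, the diagonal entries of D are the square roots of the eigenvalues of P Q, which are all real and positive. -/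
open Matrix

private lemma posDef_conj_aux {n : ℕ} {Q B : Matrix (Fin n) (Fin n) ℝ}
    (hQ : Q.PosDef) (hB : IsUnit B.det) : (Bᴴ * Q * B).PosDef := by
  refine Matrix.PosDef.of_dotProduct_mulVec_pos (Matrix.isHermitian_conjTranspose_mul_mul B hQ.1) fun x hx => ?_
  have hBx : B *ᵥ x ≠ 0 := fun h => hx <|
    Matrix.mulVec_injective_iff_isUnit.mpr ((Matrix.isUnit_iff_isUnit_det B).mpr hB)
      (show B *ᵥ x = B *ᵥ 0 by simpa using h)
  simpa only [Matrix.star_mulVec, Matrix.dotProduct_mulVec, Matrix.vecMul_vecMul]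
    using hQ.dotProduct_mulVec_pos hBx

/-- Existence of a balancing transformation: for symmetric positive definite `P` and `Q`
there are an invertible matrix `S` and a diagonal matrix `D` with strictly positive diagonal
entries such that `S P Sᵀ = D`, `S⁻ᵀ Q S⁻¹ = D` and `D² = S (P Q) S⁻¹`; in particular the
diagonal entries of `D` are the square roots of the eigenvalues of `P Q`, which are real and
positive. -/
theorem exists_balancing_transformation {n : ℕ}
    (P Q : Matrix (Fin n) (Fin n) ℝ) (hP : P.PosDef) (hQ : Q.PosDef) :
    ∃ S D : Matrix (Fin n) (Fin n) ℝ,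
      IsUnit S.det ∧
      D.IsDiag ∧
      (∀ i : Fin n, 0 < D i i) ∧
      S * P * Sᵀ = D ∧
      (S⁻¹)ᵀ * Q * S⁻¹ = D ∧
      D * D = S * (P * Q) * S⁻¹ := by
  classical
  open scoped MatrixOrder in set L := CFC.sqrt P with hLdef
  have hLsd : L.PosSemidef := by open scoped MatrixOrder in exact (CFC.sqrt_nonneg P).posSemidef
  have hLT : Lᵀ = L := by
    have := hLsd.1
    rwa [Matrix.IsHermitian, Matrix.conjTranspose_eq_transpose_of_trivial] at this
  have hLL : L * L = P := by open scoped MatrixOrder in exact CFC.sqrt_mul_sqrt_self P hP.posSemidef.nonneg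
  have hLdet : IsUnit L.det := by
    have hdet : L.det * L.det = P.det := by rw [← Matrix.det_mul, hLL]
    refine isUnit_iff_ne_zero.mpr fun h => hP.det_pos.ne' ?_
    rw [← hdet, h, zero_mul]
  have hLiL : L⁻¹ * L = 1 := Matrix.nonsing_inv_mul L hLdet
  have hLLi : L * L⁻¹ = 1 := Matrix.mul_nonsing_inv L hLdet
  have hLiT : (L⁻¹)ᵀ = L⁻¹ := by rw [Matrix.transpose_nonsing_inv, hLT]
  -- the positive definite matrix M = L Q L
  have hM : (L * Q * L).PosDef := by
    have := posDef_conj_aux hQ hLdet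
    rwa [hLsd.1.eq] at this
  have hMH : (L * Q * L).IsHermitian := hM.1
  set U : Matrix (Fin n) (Fin n) ℝ := (hMH.eigenvectorUnitary : Matrix (Fin n) (Fin n) ℝ) with hUdef
  set ev : Fin n → ℝ := hMH.eigenvalues with hevdef
  have hev : ∀ i, 0 < ev i := hM.eigenvalues_pos
  have hspec : L * Q * L = U * Matrix.diagonal ev * Uᵀ := by
    have := hMH.spectral_theorem
    simpa [Matrix.star_eq_conjTranspose, Matrix.conjTranspose_eq_transpose_of_trivial,
      Function.comp] using this
  have hUUt : U * Uᵀ = 1 := by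
    have := (Matrix.mem_unitaryGroup_iff).mp hMH.eigenvectorUnitary.2
    simpa [Matrix.star_eq_conjTranspose, Matrix.conjTranspose_eq_transpose_of_trivial] using this
  have hUtU : Uᵀ * U = 1 := by
    have := (Matrix.mem_unitaryGroup_iff').mp hMH.eigenvectorUnitary.2
    simpa [Matrix.star_eq_conjTranspose, Matrix.conjTranspose_eq_transpose_of_trivial] using this
  -- fourth roots of eigenvalues
  set c : Fin n → ℝ := fun i => Real.sqrt (Real.sqrt (ev i)) with hcdef
  have hc : ∀ i, 0 < c i := fun i => Real.sqrt_pos.mpr (Real.sqrt_pos.mpr (hev i))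
  have hcc : ∀ i, c i * c i = Real.sqrt (ev i) := fun i =>
    Real.mul_self_sqrt (Real.sqrt_nonneg _)
  set C : Matrix (Fin n) (Fin n) ℝ := Matrix.diagonal c with hCdef
  set Ci : Matrix (Fin n) (Fin n) ℝ := Matrix.diagonal (fun i => (c i)⁻¹) with hCidef
  set D : Matrix (Fin n) (Fin n) ℝ := Matrix.diagonal (fun i => Real.sqrt (ev i)) with hDdef
  have hCCi : C * Ci = 1 := by
    rw [hCdef, hCidef, Matrix.diagonal_mul_diagonal]
    have h : (fun i => c i * (c i)⁻¹) = fun _ : Fin n => (1:ℝ) :=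
      funext fun i => mul_inv_cancel₀ (hc i).ne'
    rw [h, Matrix.diagonal_one]
  have hCiC : Ci * C = 1 := by
    rw [hCdef, hCidef, Matrix.diagonal_mul_diagonal]
    have h : (fun i => (c i)⁻¹ * c i) = fun _ : Fin n => (1:ℝ) :=
      funext fun i => inv_mul_cancel₀ (hc i).ne'
    rw [h, Matrix.diagonal_one]
  have hCC : C * C = D := by
    rw [hCdef, hDdef, Matrix.diagonal_mul_diagonal]
    have h : (fun i => c i * c i) = fun i => Real.sqrt (ev i) := funext hcc
    rw [h]
  have hCT : Cᵀ = C := Matrix.diagonal_transpose c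
  set S : Matrix (Fin n) (Fin n) ℝ := C * Uᵀ * L⁻¹ with hSdef
  -- right inverse of S
  have hSright : S * (L * (U * Ci)) = 1 := by
    calc S * (L * (U * Ci)) = C * Uᵀ * ((L⁻¹ * L) * U) * Ci := by
          simp only [hSdef, Matrix.mul_assoc]
      _ = C * (Uᵀ * U) * Ci := by rw [hLiL, one_mul, Matrix.mul_assoc C Uᵀ U]
      _ = C * Ci := by rw [hUtU, mul_one]
      _ = 1 := hCCi
  have hSdet : IsUnit S.det := Matrix.isUnit_det_of_right_inverse hSright
  have hSinv : S⁻¹ = L * (U * Ci) := Matrix.inv_eq_right_inv hSright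
  -- first identity
  have hST : Sᵀ = L⁻¹ * (U * C) := by
    rw [hSdef, Matrix.transpose_mul, Matrix.transpose_mul, hLiT, hCT,
      Matrix.transpose_transpose]
  have h1 : S * P * Sᵀ = D := by
    calc S * P * Sᵀ = C * Uᵀ * ((L⁻¹ * L) * ((L * L⁻¹) * U)) * C := by
          rw [hST, ← hLL]; simp only [hSdef, Matrix.mul_assoc]
      _ = C * (Uᵀ * U) * C := by rw [hLiL, hLLi, one_mul, one_mul, Matrix.mul_assoc C Uᵀ U]
      _ = C * C := by rw [hUtU, mul_one]
      _ = D := hCC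
  -- second identity
  have hSiT : (S⁻¹)ᵀ = Ci * Uᵀ * L := by
    rw [hSinv, Matrix.transpose_mul, Matrix.transpose_mul, hLT,
      Matrix.diagonal_transpose, Matrix.mul_assoc]
  have h2 : (S⁻¹)ᵀ * Q * S⁻¹ = D := by
    have key : Uᵀ * (L * Q * L) * U = Matrix.diagonal ev := by
      calc Uᵀ * (L * Q * L) * U = (Uᵀ * U) * Matrix.diagonal ev * (Uᵀ * U) := by
            rw [hspec]; simp only [Matrix.mul_assoc]
        _ = Matrix.diagonal ev := by rw [hUtU, one_mul, mul_one]
    calc (S⁻¹)ᵀ * Q * S⁻¹ = Ci * (Uᵀ * (L * Q * L) * U) * Ci := by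
          rw [hSiT, hSinv]; simp only [Matrix.mul_assoc]
      _ = Ci * Matrix.diagonal ev * Ci := by rw [key]
      _ = D := by
          rw [hCidef, hDdef, Matrix.diagonal_mul_diagonal, Matrix.diagonal_mul_diagonal]
          have h : (fun i => (c i)⁻¹ * ev i * (c i)⁻¹) = fun i => Real.sqrt (ev i) := by
            funext i
            have h2 : (c i)⁻¹ * ev i * (c i)⁻¹ = ev i / Real.sqrt (ev i) := by
              rw [← hcc i, div_eq_mul_inv, mul_inv]; ring
            rw [h2, Real.div_sqrt]
          rw [h]
  -- third identity
  have h3 : D * D = S * (P * Q) * S⁻¹ := by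
    have hTTi : Sᵀ * (S⁻¹)ᵀ = 1 := by
      rw [← Matrix.transpose_mul, Matrix.nonsing_inv_mul S hSdet, Matrix.transpose_one]
    calc D * D = (S * P * Sᵀ) * ((S⁻¹)ᵀ * Q * S⁻¹) := by rw [h1, h2]
      _ = S * P * (Sᵀ * (S⁻¹)ᵀ) * Q * S⁻¹ := by simp only [Matrix.mul_assoc]
      _ = S * (P * Q) * S⁻¹ := by rw [hTTi, mul_one]; simp only [Matrix.mul_assoc]
  exact ⟨S, D, hSdet, Matrix.isDiag_diagonal _, fun i => by
    simpa [hDdef, Matrix.diagonal_apply_eq] using Real.sqrt_pos.mpr (hev i),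
    h1, h2, h3⟩
end

section
/- Let n ∈ ℕ, r, c ∈ ℝ, let ξ : {1,…,n} → ℝ, let K = (k_{ij}) be a real n×n matrix, and let x₀ ∈ ℝⁿ. Set A := r·I (with I the n×n identity), N_i := ξ_i e_i e_iᵀ for i = 1,…,n (where e_i is the i-th standard basis vector), and h_{ij} := 2r + c ξ_i ξ_j k_{ij}. Define F : ℝ → (real n×n matrices) entrywise by F(t)_{ij} := exp(h_{ij} t) · x₀ᵢ x₀ⱼ. Then F(0) = x₀ x₀ᵀ and, for all t ∈ ℝ, F'(t) = A F(t) + F(t) Aᵀ + c Σ_{i,j=1}^{n} k_{ij} N_i F(t) N_jᵀ. -/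
open Matrix

open scoped BigOperators

/-- For the multi-asset model with `A = r I` and `N_i = ξ_i e_i e_iᵀ`, the matrix function
`F(t)` with entries `F(t)_{ij} = exp(h_{ij} t) x₀ᵢ x₀ⱼ`, where
`h_{ij} = 2 r + c ξ_i ξ_j k_{ij}`, satisfies `F(0) = x₀ x₀ᵀ` and the generalized Lyapunov
differential equation `F'(t) = A F(t) + F(t) Aᵀ + c Σ_{i,j} k_{ij} N_i F(t) N_jᵀ`. -/
theorem explicit_solution_generalized_lyapunov_ode {n : ℕ}
    (r c : ℝ) (ξ : Fin n → ℝ) (K : Matrix (Fin n) (Fin n) ℝ) (x₀ : Fin n → ℝ)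
    (A : Matrix (Fin n) (Fin n) ℝ) (hA : A = r • (1 : Matrix (Fin n) (Fin n) ℝ))
    (N : Fin n → Matrix (Fin n) (Fin n) ℝ)
    (hN : ∀ i : Fin n, N i = ξ i • Matrix.single i i (1 : ℝ))
    (h : Fin n → Fin n → ℝ) (hh : ∀ i j : Fin n, h i j = 2 * r + c * ξ i * ξ j * K i j)
    (F : ℝ → Matrix (Fin n) (Fin n) ℝ)
    (hF : ∀ t : ℝ, F t = Matrix.of fun i j => Real.exp (h i j * t) * (x₀ i * x₀ j)) :
    F 0 = vecMulVec x₀ x₀ ∧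
    ∀ t : ℝ, ∀ i j : Fin n,
      HasDerivAt (fun s => F s i j)
        ((A * F t + F t * Aᵀ +
          c • ∑ i' : Fin n, ∑ j' : Fin n, K i' j' • (N i' * F t * (N j')ᵀ)) i j) t := by
  constructor
  · ext i j
    simp [hF, vecMulVec_apply]
  · intro t i j
    have key : (A * F t + F t * Aᵀ +
          c • ∑ i' : Fin n, ∑ j' : Fin n, K i' j' • (N i' * F t * (N j')ᵀ)) i j
        = h i j * F t i j := by
      have hsum : ∀ i' j' : Fin n, (N i' * F t * (N j')ᵀ) i j
          = (if i' = i then 1 else 0) * (if j' = j then 1 else 0) *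
            (ξ i' * ξ j' * F t i j) := by
        intro i' j'
        simp only [hN, Matrix.smul_mul, Matrix.mul_smul, Matrix.transpose_smul,
          Matrix.smul_apply, smul_eq_mul]
        rw [show (Matrix.single j' j' (1:ℝ))ᵀ = Matrix.single j' j' 1 by
          ext a b; simp [Matrix.single, and_comm]]
        by_cases hi : i' = i <;> by_cases hj : j' = j <;>
          simp [hi, hj, Matrix.mul_apply, Matrix.single, Finset.sum_ite_eq,
            Ne.symm, mul_comm, mul_assoc, mul_left_comm]
      simp only [Matrix.add_apply, Matrix.smul_apply, Matrix.sum_apply, hA,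
        Matrix.smul_mul, Matrix.mul_smul, Matrix.transpose_smul, Matrix.transpose_one,
        Matrix.one_mul, Matrix.mul_one, smul_eq_mul, hsum]
      rw [Finset.sum_eq_single i, Finset.sum_eq_single j]
      · simp [hh]; ring
      · intro b _ hb; simp [hb]
      · intro hb; exact absurd (Finset.mem_univ j) hb
      · intro b _ hb
        rw [Finset.sum_eq_zero]; intro j' _; simp [hb]
      · intro hb; exact absurd (Finset.mem_univ i) hb
    rw [key]
    have : (fun s => F s i j) = fun s => Real.exp (h i j * s) * (x₀ i * x₀ j) := by
      funext s; rw [hF]; rfl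
    rw [this, hF]
    have hd : HasDerivAt (fun s => Real.exp (h i j * s))
        (Real.exp (h i j * t) * h i j) t := by
      simpa using ((hasDerivAt_id t).const_mul (h i j)).exp
    simpa [mul_comm, mul_assoc, mul_left_comm] using hd.mul_const (x₀ i * x₀ j)
end

section
/- Let n ∈ ℕ, r, c ∈ ℝ, T > 0, let ξ : {1,…,n} → ℝ, let K = (k_{ij}) be a real n×n matrix, and let x₀ ∈ ℝⁿ. Set A := r·I, N_i := ξ_i e_i e_iᵀ, h_{ij} := 2r + c ξ_i ξ_j k_{ij}, and assume h_{ij} ≠ 0 for all i, j. Let F(t) be the matrix with entries F(t)_{ij} = exp(h_{ij} t) x₀ᵢ x₀ⱼ, and let P be the matrix with entries P_{ij} := ((exp(h_{ij} T) − 1)/h_{ij}) · x₀ᵢ x₀ⱼ. Then P = ∫₀ᵀ F(t) dt, and P satisfies the generalized Lyapunov equation F(T) − x₀ x₀ᵀ = A P + P Aᵀ + c Σ_{i,j=1}^{n} k_{ij} N_i P N_jᵀ. -/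
open Matrix

open scoped BigOperators

/-- Explicit closed form of the time-limited reachability Gramian for the multi-asset model
with `A = r I` and `N_i = ξ_i e_i e_iᵀ`: the matrix `P` with entries
`P_{ij} = ((exp(h_{ij} T) - 1)/h_{ij}) x₀ᵢ x₀ⱼ`, where `h_{ij} = 2 r + c ξ_i ξ_j k_{ij} ≠ 0`,
equals `∫₀ᵀ F(t) dt` for `F(t)_{ij} = exp(h_{ij} t) x₀ᵢ x₀ⱼ`, and satisfies the generalized
Lyapunov equation `F(T) - x₀ x₀ᵀ = A P + P Aᵀ + c Σ_{i,j} k_{ij} N_i P N_jᵀ`. -/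
theorem explicit_reachability_gramian {n : ℕ}
    (r c T : ℝ) (hT : 0 < T)
    (ξ : Fin n → ℝ) (K : Matrix (Fin n) (Fin n) ℝ) (x₀ : Fin n → ℝ)
    (A : Matrix (Fin n) (Fin n) ℝ) (hA : A = r • (1 : Matrix (Fin n) (Fin n) ℝ))
    (N : Fin n → Matrix (Fin n) (Fin n) ℝ)
    (hN : ∀ i : Fin n, N i = ξ i • Matrix.single i i (1 : ℝ))
    (h : Fin n → Fin n → ℝ) (hh : ∀ i j : Fin n, h i j = 2 * r + c * ξ i * ξ j * K i j)
    (hne : ∀ i j : Fin n, h i j ≠ 0)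
    (F : ℝ → Matrix (Fin n) (Fin n) ℝ)
    (hF : ∀ t : ℝ, F t = Matrix.of fun i j => Real.exp (h i j * t) * (x₀ i * x₀ j))
    (P : Matrix (Fin n) (Fin n) ℝ)
    (hP : P = Matrix.of fun i j => ((Real.exp (h i j * T) - 1) / h i j) * (x₀ i * x₀ j)) :
    (∀ i j : Fin n, P i j = ∫ t in (0 : ℝ)..T, F t i j) ∧
    F T - vecMulVec x₀ x₀ =
      A * P + P * Aᵀ + c • ∑ i : Fin n, ∑ j : Fin n, K i j • (N i * P * (N j)ᵀ) := by
  constructor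
  · intro i j
    have : (∫ t in (0:ℝ)..T, F t i j)
        = ∫ t in (0:ℝ)..T, Real.exp (h i j * t) * (x₀ i * x₀ j) := by
      congr 1; ext t; rw [hF]; rfl
    rw [this, intervalIntegral.integral_mul_const,
      intervalIntegral.integral_comp_mul_left (fun t => Real.exp t) (hne i j),
      integral_exp, hP]
    simp [smul_eq_mul, div_eq_inv_mul]
  · ext i j
    have hPij : P i j = ((Real.exp (h i j * T) - 1) / h i j) * (x₀ i * x₀ j) := by
      rw [hP]; rfl
    have key : ∀ a b : Fin n, (N a * P * (N b)ᵀ) i j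
        = (if a = i then 1 else 0) * (if b = j then 1 else 0) * (ξ a * ξ b * P a b) := by
      intro a b
      rw [hN a, hN b]
      simp [Matrix.mul_apply, Matrix.single, Matrix.transpose_apply, ite_and,
        Finset.sum_ite_eq, Finset.sum_ite_eq', mul_ite, ite_mul, smul_eq_mul]
      split_ifs with h1 h2 <;> subst_vars <;> ring
    have hsum : (∑ a : Fin n, ∑ b : Fin n, K a b • (N a * P * (N b)ᵀ)) i j
        = K i j * (ξ i * ξ j * P i j) := by
      simp only [Matrix.sum_apply, Matrix.smul_apply, key, smul_eq_mul]
      simp [Finset.sum_ite_eq, Finset.sum_ite_eq', mul_ite, ite_mul, Finset.mul_sum]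
    have hlhs : (A * P + P * Aᵀ + c • ∑ a : Fin n, ∑ b : Fin n, K a b • (N a * P * (N b)ᵀ)) i j
        = (2 * r + c * ξ i * ξ j * K i j) * P i j := by
      simp only [Matrix.add_apply, hA, Matrix.smul_apply, Matrix.smul_mul, Matrix.one_mul,
        Matrix.transpose_smul, Matrix.transpose_one, Matrix.mul_smul, Matrix.mul_one,
        smul_eq_mul, hsum]
      ring
    rw [Matrix.sub_apply, hF, vecMulVec_apply, hlhs, ← hh i j, hPij, Matrix.of_apply]
    have := hne i j
    field_simp
end
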